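/- arXiv:math/9310214 — 9 statements merged into one kernel-verified Lean document; each statement's English description precedes it below -/
import Mathlib

section
/- Let $X_1, X_2, \dots$ be independent identically distributed random variables with values in a Banach space, and set $S_k = \sum_{i=1}^k X_i$. Then for all integers $1 \le j \le k$ and all $t > 0$, $\Pr(\|S_j\| > t) \le 3\, \Pr(\|S_k\| > t/10)$. -/
open MeasureTheory ProbabilityTheory
open scoped ENNReal NNReal

section Aux

variable {Ω : Type*} [MeasurableSpace Ω] {P : Measure Ω} [IsProbabilityMeasure P]
  {E : Type*} [NormedAddCommGroup E]
  [MeasurableSpace E] [BorelSpace E] [SecondCountableTopology E]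

/-- Sums of an independent family over disjoint finsets are independent. -/
lemma aux_indep_sum (X : ℕ → Ω → E) (hmeas : ∀ i, Measurable (X i))
    (hindep : iIndepFun X P) (S T : Finset ℕ) (hST : Disjoint S T) :
    IndepFun (fun ω => ∑ i ∈ S, X i ω) (fun ω => ∑ i ∈ T, X i ω) P := by
  have h := hindep.indepFun_finset S T hST hmeas
  have gS : Measurable (fun v : S → E => ∑ i, v i) :=
    Finset.measurable_sum _ (fun i _ => measurable_pi_apply i)
  have gT : Measurable (fun v : T → E => ∑ i, v i) :=
    Finset.measurable_sum _ (fun i _ => measurable_pi_apply i)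
  have h2 := h.comp gS gT
  have e1 : (fun ω => ∑ i ∈ S, X i ω)
      = (fun v : S → E => ∑ i, v i) ∘ (fun a (i : S) => X i a) := by
    funext ω
    exact (Finset.sum_attach S fun i => X i ω).symm
  have e2 : (fun ω => ∑ i ∈ T, X i ω)
      = (fun v : T → E => ∑ i, v i) ∘ (fun a (i : T) => X i a) := by
    funext ω
    exact (Finset.sum_attach T fun i => X i ω).symm
  rw [e1, e2]
  exact h2

/-- Sums of independent identically distributed pairs are identically distributed. -/
lemma aux_add_ident {X Y X' Y' : Ω → E}
    (hXY : IndepFun X Y P) (hXY' : IndepFun X' Y' P)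
    (hX : IdentDistrib X X' P P) (hY : IdentDistrib Y Y' P P)
    (mX : Measurable X) (mY : Measurable Y) (mX' : Measurable X') (mY' : Measurable Y') :
    IdentDistrib (fun ω => X ω + Y ω) (fun ω => X' ω + Y' ω) P P := by
  refine ⟨(mX.add mY).aemeasurable, (mX'.add mY').aemeasurable, ?_⟩
  have h1 := (indepFun_iff_map_prod_eq_prod_map_map mX.aemeasurable mY.aemeasurable).mp hXY
  have h2 := (indepFun_iff_map_prod_eq_prod_map_map mX'.aemeasurable mY'.aemeasurable).mp hXY'
  have e1 : (fun ω => X ω + Y ω)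
      = (fun p : E × E => p.1 + p.2) ∘ (fun ω => (X ω, Y ω)) := rfl
  have e2 : (fun ω => X' ω + Y' ω)
      = (fun p : E × E => p.1 + p.2) ∘ (fun ω => (X' ω, Y' ω)) := rfl
  rw [e1, e2, ← Measure.map_map measurable_add (mX.prodMk mY),
    ← Measure.map_map measurable_add (mX'.prodMk mY'), h1, h2, hX.map_eq, hY.map_eq]

/-- A block of `c` consecutive variables of an i.i.d. family has the same sum distribution
as the first `c` variables. -/
lemma aux_ident_sum (X : ℕ → Ω → E) (hmeas : ∀ i, Measurable (X i))
    (hindep : iIndepFun X P)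
    (hident : ∀ i, IdentDistrib (X i) (X 0) P P) :
    ∀ (c a : ℕ), IdentDistrib (fun ω => ∑ i ∈ Finset.Ico a (a + c), X i ω)
      (fun ω => ∑ i ∈ Finset.range c, X i ω) P P := by
  intro c
  induction c with
  | zero =>
    intro a
    simp only [Nat.add_zero, Finset.Ico_self, Finset.sum_empty, Finset.range_zero]
    exact IdentDistrib.refl aemeasurable_const
  | succ c ih =>
    intro a
    have e1 : (fun ω => ∑ i ∈ Finset.Ico a (a + (c + 1)), X i ω)
        = fun ω => (∑ i ∈ Finset.Ico a (a + c), X i ω) + X (a + c) ω := by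
      funext ω
      rw [show a + (c + 1) = (a + c) + 1 by omega,
        Finset.sum_Ico_succ_top (by omega : a ≤ a + c)]
    have e2 : (fun ω => ∑ i ∈ Finset.range (c + 1), X i ω)
        = fun ω => (∑ i ∈ Finset.range c, X i ω) + X c ω := by
      funext ω
      rw [Finset.sum_range_succ]
    rw [e1, e2]
    have hind1 : IndepFun (fun ω => ∑ i ∈ Finset.Ico a (a + c), X i ω) (X (a + c)) P := by
      have := aux_indep_sum X hmeas hindep (Finset.Ico a (a + c)) {a + c}
        (by simp [Finset.disjoint_singleton_right])
      simpa using this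
    have hind2 : IndepFun (fun ω => ∑ i ∈ Finset.range c, X i ω) (X c) P := by
      have := aux_indep_sum X hmeas hindep (Finset.range c) {c}
        (by simp [Finset.disjoint_singleton_right])
      simpa using this
    exact aux_add_ident hind1 hind2 (ih a) ((hident (a + c)).trans (hident c).symm)
      (Finset.measurable_sum _ fun i _ => hmeas i) (hmeas (a + c))
      (Finset.measurable_sum _ fun i _ => hmeas i) (hmeas c)

/-- Three events of probability `> 2/3` have a common point. -/
lemma aux_triple {A B C : Set Ω} (hA : MeasurableSet A) (hB : MeasurableSet B)
    (hC : MeasurableSet C) (pA : 2/3 < P A) (pB : 2/3 < P B) (pC : 2/3 < P C) :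
    (A ∩ B ∩ C).Nonempty := by
  rw [Set.nonempty_iff_ne_empty]
  intro hempty
  have hBC : B ∩ C ⊆ Aᶜ := by
    intro ω hω hωA
    have : ω ∈ A ∩ B ∩ C := ⟨⟨hωA, hω.1⟩, hω.2⟩
    rw [hempty] at this
    exact this
  have hAc : P Aᶜ < 1/3 := by
    by_contra hcon
    push_neg at hcon
    have hsum : P A + P Aᶜ = 1 := prob_add_prob_compl hA
    have : (1:ℝ≥0∞) < 1 := by
      calc (1:ℝ≥0∞) = 2/3 + 1/3 := by
            symm
            rw [ENNReal.div_add_div_same]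
            norm_num
            exact ENNReal.div_self (by norm_num) (by norm_num)
      _ < P A + 1/3 := ENNReal.add_lt_add_right
            ((ENNReal.div_lt_top (by norm_num) (by norm_num)).ne) pA
      _ ≤ P A + P Aᶜ := add_le_add le_rfl hcon
      _ = 1 := hsum
    exact absurd this (lt_irrefl _)
  have h1 : P B + P C = P (B ∪ C) + P (B ∩ C) := (measure_union_add_inter B hC).symm
  have h2 : P B + P C ≤ 1 + P Aᶜ :=
    h1.le.trans (add_le_add prob_le_one (measure_mono hBC))
  have h3 : (4:ℝ≥0∞)/3 < P B + P C := by
    calc (4:ℝ≥0∞)/3 = 2/3 + 2/3 := by rw [ENNReal.div_add_div_same]; norm_num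
    _ < P B + P C := ENNReal.add_lt_add pB pC
  have h4 : 1 + P Aᶜ < (4:ℝ≥0∞)/3 := by
    calc 1 + P Aᶜ < 1 + 1/3 := ENNReal.add_lt_add_left ENNReal.one_ne_top hAc
    _ = 4/3 := by
        have h1 : (1:ℝ≥0∞) = 3/3 := (ENNReal.div_self (by norm_num) (by norm_num)).symm
        nth_rewrite 1 [h1]
        rw [ENNReal.div_add_div_same]
        norm_num
  exact absurd (h3.trans_le h2) (not_lt.mpr h4.le)

end Aux

/-- Theorem 1 of Montgomery-Smith, "Comparison of Sums of Independent Identically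
Distributed Random Variables": if `X 0, X 1, ...` are i.i.d. Banach-space-valued random
variables and `S k = ∑_{i<k} X i` is the `k`-th partial sum, then for `1 ≤ j ≤ k` and
`t > 0`, `P(‖S j‖ > t) ≤ 3 P(‖S k‖ > t/10)`. -/
theorem sums_iid_comparison
    {Ω : Type*} [MeasurableSpace Ω] {P : Measure Ω} [IsProbabilityMeasure P]
    {E : Type*} [NormedAddCommGroup E] [NormedSpace ℝ E] [CompleteSpace E]
    [MeasurableSpace E] [BorelSpace E] [SecondCountableTopology E]
    (X : ℕ → Ω → E) (hmeas : ∀ i, Measurable (X i))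
    (hindep : iIndepFun X P)
    (hident : ∀ i, IdentDistrib (X i) (X 0) P P)
    {j k : ℕ} (hj : 1 ≤ j) (hjk : j ≤ k) {t : ℝ} (ht : 0 < t) :
    P {ω | t < ‖∑ i ∈ Finset.range j, X i ω‖} ≤
      3 * P {ω | t / 10 < ‖∑ i ∈ Finset.range k, X i ω‖} := by
  classical
  set s : ℝ := t / 10 with hs_def
  have hs : 0 < s := by positivity
  set S : ℕ → Ω → E := fun m ω => ∑ i ∈ Finset.range m, X i ω with hS_def
  have mS : ∀ m, Measurable (S m) := fun m => Finset.measurable_sum _ fun i _ => hmeas i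
  have mIco : ∀ a b : ℕ, Measurable (fun ω => ∑ i ∈ Finset.Ico a b, X i ω) :=
    fun a b => Finset.measurable_sum _ fun i _ => hmeas i
  -- measurability of the basic events
  have mEvLe : ∀ (f : Ω → E), Measurable f → ∀ (y : E) (r : ℝ),
      MeasurableSet {ω | ‖f ω - y‖ ≤ r} :=
    fun f hf y r => measurableSet_le ((hf.sub measurable_const).norm) measurable_const
  have mEvLt : ∀ (f : Ω → E), Measurable f → ∀ r : ℝ,
      MeasurableSet {ω | r < ‖f ω‖} :=
    fun f hf r => measurableSet_lt measurable_const hf.norm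
  set α := P {ω | s < ‖S k ω‖} with hα_def
  by_cases hbig : 1 ≤ 3 * α
  · exact le_trans prob_le_one hbig
  push_neg at hbig
  -- decomposition of S k
  have hSk_split : ∀ m ≤ k, ∀ ω, S k ω = S m ω + ∑ i ∈ Finset.Ico m k, X i ω := by
    intro m hm ω
    simp only [hS_def, Finset.range_eq_Ico]
    rw [Finset.sum_Ico_consecutive _ (Nat.zero_le m) hm]
  -- P(‖S k‖ ≤ s) > 2/3
  have hαlt : α < 1/3 := by
    rw [ENNReal.lt_div_iff_mul_lt (Or.inl (by norm_num)) (Or.inl (by norm_num))]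
    calc α * 3 = 3 * α := mul_comm _ _
    _ < 1 := hbig
  have hcompl : (2:ℝ≥0∞)/3 < P {ω | ‖S k ω‖ ≤ s} := by
    have he : {ω | ‖S k ω‖ ≤ s} = {ω | s < ‖S k ω‖}ᶜ := by
      ext ω; simp [not_lt]
    have hsum : P {ω | s < ‖S k ω‖} + P {ω | ‖S k ω‖ ≤ s} = 1 := by
      rw [he]
      exact prob_add_prob_compl (mEvLt _ (mS k) s)
    by_contra hcon
    push_neg at hcon
    have : (1:ℝ≥0∞) < 1 := by
      calc (1:ℝ≥0∞) = P {ω | s < ‖S k ω‖} + P {ω | ‖S k ω‖ ≤ s} := hsum.symm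
      _ ≤ α + 2/3 := add_le_add le_rfl hcon
      _ < 1/3 + 2/3 := ENNReal.add_lt_add_right
            ((ENNReal.div_lt_top (by norm_num) (by norm_num)).ne) hαlt
      _ = 1 := by
          rw [ENNReal.div_add_div_same]
          norm_num
          exact ENNReal.div_self (by norm_num) (by norm_num)
    exact absurd this (lt_irrefl _)
  -- concentration points
  have hconc : ∀ m : ℕ, ∃ y : E, m ≤ k → (2:ℝ≥0∞)/3 < P {ω | ‖S m ω - y‖ ≤ s} := by
    intro m
    by_cases hm : m ≤ k
    swap
    · exact ⟨0, fun h => absurd h hm⟩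
    by_contra hcon
    push_neg at hcon
    have hcon' : ∀ y : E, P {ω | ‖S m ω - y‖ ≤ s} ≤ 2/3 := fun y => (hcon y).2
    set V : Ω → E := fun ω => ∑ i ∈ Finset.Ico m k, X i ω with hV_def
    have hindepVm : IndepFun V (S m) P := by
      refine (aux_indep_sum X hmeas hindep (Finset.range m) (Finset.Ico m k) ?_).symm
      simp only [Finset.disjoint_left, Finset.mem_range, Finset.mem_Ico]
      omega
    have hmap : P.map (fun ω => (V ω, S m ω)) = (P.map V).prod (P.map (S m)) :=
      (indepFun_iff_map_prod_eq_prod_map_map (mIco m k).aemeasurable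
        (mS m).aemeasurable).mp hindepVm
    have hC : MeasurableSet {p : E × E | ‖p.1 + p.2‖ ≤ s} :=
      measurableSet_le ((measurable_fst.add measurable_snd).norm) measurable_const
    have hev : {ω | ‖S k ω‖ ≤ s}
        = (fun ω => (V ω, S m ω)) ⁻¹' {p : E × E | ‖p.1 + p.2‖ ≤ s} := by
      ext ω
      simp only [Set.mem_setOf_eq, Set.mem_preimage]
      rw [hSk_split m hm ω, add_comm]
    have hle : P {ω | ‖S k ω‖ ≤ s} ≤ 2/3 := by
      rw [hev, ← Measure.map_apply ((mIco m k).prodMk (mS m)) hC, hmap,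
        Measure.prod_apply hC]
      have hslice : ∀ x : E,
          (P.map (S m)) (Prod.mk x ⁻¹' {p : E × E | ‖p.1 + p.2‖ ≤ s}) ≤ 2/3 := by
        intro x
        have : Prod.mk x ⁻¹' {p : E × E | ‖p.1 + p.2‖ ≤ s} = {a : E | ‖a - (-x)‖ ≤ s} := by
          ext a
          simp only [Set.mem_preimage, Set.mem_setOf_eq, sub_neg_eq_add, add_comm]
        have hms : MeasurableSet {a : E | ‖a - (-x)‖ ≤ s} :=
          measurableSet_le ((measurable_id.sub measurable_const).norm) measurable_const
        rw [this, Measure.map_apply (mS m) hms]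
        exact hcon' (-x)
      calc ∫⁻ x, (P.map (S m)) (Prod.mk x ⁻¹' {p : E × E | ‖p.1 + p.2‖ ≤ s}) ∂(P.map V)
          ≤ ∫⁻ _, 2/3 ∂(P.map V) := lintegral_mono hslice
        _ = 2/3 := by
            have : IsProbabilityMeasure (P.map V) :=
              Measure.isProbabilityMeasure_map (mIco m k).aemeasurable
            simp
    exact absurd (hcompl.trans_le hle) (lt_irrefl _)
  choose x hx using hconc
  -- identically distributed blocks
  have hblock : ∀ a c : ℕ, c ≤ k → ∀ y : E,
      P {ω | ‖(∑ i ∈ Finset.Ico a (a + c), X i ω) - y‖ ≤ s}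
        = P {ω | ‖S c ω - y‖ ≤ s} := by
    intro a c _ y
    have hid := aux_ident_sum X hmeas hindep hident c a
    have hmeasset : MeasurableSet {e : E | ‖e - y‖ ≤ s} :=
      measurableSet_le ((measurable_id.sub measurable_const).norm) measurable_const
    exact hid.measure_mem_eq hmeasset
  -- approximate additivity of the concentration points
  have hB : ∀ a b : ℕ, a + b ≤ k → ‖x a + x b - x (a + b)‖ ≤ 3 * s := by
    intro a b hab
    have pE1 : (2:ℝ≥0∞)/3 < P {ω | ‖S a ω - x a‖ ≤ s} := hx a (by omega)
    have pE3 : (2:ℝ≥0∞)/3 < P {ω | ‖S (a + b) ω - x (a + b)‖ ≤ s} := hx (a + b) hab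
    have pE2 : (2:ℝ≥0∞)/3 < P {ω | ‖(∑ i ∈ Finset.Ico a (a + b), X i ω) - x b‖ ≤ s} := by
      rw [hblock a b (by omega) (x b)]
      exact hx b (by omega)
    obtain ⟨ω, ⟨h1, h2⟩, h3⟩ := aux_triple (mEvLe _ (mS a) (x a) s)
      (mEvLe _ (mIco a (a + b)) (x b) s) (mEvLe _ (mS (a + b)) (x (a + b)) s) pE1 pE2 pE3
    simp only [Set.mem_setOf_eq] at h1 h2 h3
    have hsplit : S (a + b) ω = S a ω + ∑ i ∈ Finset.Ico a (a + b), X i ω := by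
      simp only [hS_def, Finset.range_eq_Ico]
      rw [Finset.sum_Ico_consecutive _ (Nat.zero_le a) (by omega : a ≤ a + b)]
    have hkey : x a + x b - x (a + b)
        = (x a - S a ω) + (x b - ∑ i ∈ Finset.Ico a (a + b), X i ω)
            + (S (a + b) ω - x (a + b)) := by
      rw [hsplit]; abel
    rw [hkey]
    calc ‖(x a - S a ω) + (x b - ∑ i ∈ Finset.Ico a (a + b), X i ω)
            + (S (a + b) ω - x (a + b))‖
        ≤ ‖x a - S a ω‖ + ‖x b - ∑ i ∈ Finset.Ico a (a + b), X i ω‖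
            + ‖S (a + b) ω - x (a + b)‖ := norm_add₃_le
      _ ≤ s + s + s := by
          have ha1 : ‖x a - S a ω‖ ≤ s := by rw [norm_sub_rev]; exact h1
          have ha2 : ‖x b - ∑ i ∈ Finset.Ico a (a + b), X i ω‖ ≤ s := by
            rw [norm_sub_rev]; exact h2
          gcongr
      _ = 3 * s := by ring
  -- ‖x k‖ ≤ 2 s
  have hxk : ‖x k‖ ≤ 2 * s := by
    obtain ⟨ω, ⟨h1, h2⟩, _⟩ := aux_triple (mEvLe _ (mS k) (x k) s)
      (measurableSet_le (mS k).norm measurable_const) MeasurableSet.univ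
      (hx k le_rfl) hcompl
      (by rw [measure_univ, ENNReal.div_lt_iff (Or.inl (by norm_num)) (Or.inl (by norm_num)),
            one_mul]
          norm_num)
    simp only [Set.mem_setOf_eq] at h1 h2
    have hk1 : ‖x k - S k ω‖ ≤ s := by rw [norm_sub_rev]; exact h1
    calc ‖x k‖ = ‖(x k - S k ω) + S k ω‖ := by rw [sub_add_cancel]
    _ ≤ ‖x k - S k ω‖ + ‖S k ω‖ := norm_add_le _ _
    _ ≤ s + s := by gcongr
    _ = 2 * s := by ring
  -- all concentration points are small
  have hxsmall : ∀ m ≤ k, ‖x m‖ ≤ 8 * s := by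
    obtain ⟨m₀, hm₀mem, hm₀max⟩ := Finset.exists_max_image (Finset.range (k + 1))
      (fun m => ‖x m‖) ⟨0, by simp⟩
    have hm₀k : m₀ ≤ k := by simpa [Nat.lt_succ_iff] using hm₀mem
    have hmax : ∀ m ≤ k, ‖x m‖ ≤ ‖x m₀‖ := fun m hm =>
      hm₀max m (by simpa [Nat.lt_succ_iff] using hm)
    have hm₀small : ‖x m₀‖ ≤ 8 * s := by
      rcases le_or_gt (2 * m₀) k with h2 | h2
      · -- doubling
        have hb := hB m₀ m₀ (by omega)
        have : 2 * ‖x m₀‖ ≤ ‖x (m₀ + m₀)‖ + 3 * s := by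
          calc 2 * ‖x m₀‖ = ‖x m₀ + x m₀‖ := by
                rw [← two_smul ℝ (x m₀), norm_smul]; simp
          _ = ‖(x m₀ + x m₀ - x (m₀ + m₀)) + x (m₀ + m₀)‖ := by rw [sub_add_cancel]
          _ ≤ ‖x m₀ + x m₀ - x (m₀ + m₀)‖ + ‖x (m₀ + m₀)‖ := norm_add_le _ _
          _ ≤ 3 * s + ‖x (m₀ + m₀)‖ := by gcongr
          _ = ‖x (m₀ + m₀)‖ + 3 * s := by ring
        have h4 : ‖x (m₀ + m₀)‖ ≤ ‖x m₀‖ := hmax _ (by omega)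
        nlinarith [hs]
      · -- reflection + doubling
        set a := 2 * m₀ - k with ha_def
        have hb1 : ‖x a + x (k - m₀) - x m₀‖ ≤ 3 * s := by
          have := hB a (k - m₀) (by omega)
          rwa [show a + (k - m₀) = m₀ by omega] at this
        have hb2 : ‖x m₀ + x (k - m₀) - x k‖ ≤ 3 * s := by
          have := hB m₀ (k - m₀) (by omega)
          rwa [show m₀ + (k - m₀) = k by omega] at this
        have hkey : x m₀ + x m₀
            = (x m₀ - (x a + x (k - m₀))) + (x m₀ + x (k - m₀) - x k) + x a + x k := by
          abel
        have : 2 * ‖x m₀‖ ≤ ‖x a‖ + 8 * s := by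
          calc 2 * ‖x m₀‖ = ‖x m₀ + x m₀‖ := by
                rw [← two_smul ℝ (x m₀), norm_smul]; simp
          _ = ‖(x m₀ - (x a + x (k - m₀))) + (x m₀ + x (k - m₀) - x k) + x a + x k‖ := by
                rw [hkey]
          _ ≤ ‖x m₀ - (x a + x (k - m₀))‖ + ‖x m₀ + x (k - m₀) - x k‖ + ‖x a‖ + ‖x k‖ := by
                have t1 := norm_add_le
                  (x m₀ - (x a + x (k - m₀)) + (x m₀ + x (k - m₀) - x k) + x a) (x k)
                have t2 := norm_add_le
                  (x m₀ - (x a + x (k - m₀)) + (x m₀ + x (k - m₀) - x k)) (x a)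
                have t3 := norm_add_le (x m₀ - (x a + x (k - m₀))) (x m₀ + x (k - m₀) - x k)
                linarith
          _ ≤ 3 * s + (3 * s) + ‖x a‖ + 2 * s := by
                have h5 : ‖x m₀ - (x a + x (k - m₀))‖ ≤ 3 * s := by
                  rw [norm_sub_rev]; exact hb1
                gcongr
          _ = ‖x a‖ + 8 * s := by ring
        have h4 : ‖x a‖ ≤ ‖x m₀‖ := hmax a (by omega)
        nlinarith [hs]
    exact fun m hm => (hmax m hm).trans hm₀small
  -- final step
  set V : Ω → E := fun ω => ∑ i ∈ Finset.Ico j k, X i ω with hV_def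
  set A : Set Ω := {ω | t < ‖S j ω‖} with hA_def
  set F : Set Ω := {ω | ‖V ω - x (k - j)‖ ≤ s} with hF_def
  have hPF : (2:ℝ≥0∞)/3 < P F := by
    have : P F = P {ω | ‖S (k - j) ω - x (k - j)‖ ≤ s} := by
      have := hblock j (k - j) (by omega) (x (k - j))
      rwa [show j + (k - j) = k by omega] at this
    rw [this]
    exact hx (k - j) (by omega)
  have hindepAF : IndepFun (S j) V P := by
    refine aux_indep_sum X hmeas hindep (Finset.range j) (Finset.Ico j k) ?_
    simp only [Finset.disjoint_left, Finset.mem_range, Finset.mem_Ico]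
    omega
  have hsub : A ∩ F ⊆ {ω | s < ‖S k ω‖} := by
    intro ω ⟨hωA, hωF⟩
    simp only [hA_def, Set.mem_setOf_eq] at hωA
    simp only [hF_def, Set.mem_setOf_eq] at hωF
    simp only [Set.mem_setOf_eq]
    have hVsmall : ‖V ω‖ ≤ 9 * s := by
      calc ‖V ω‖ = ‖(V ω - x (k - j)) + x (k - j)‖ := by rw [sub_add_cancel]
      _ ≤ ‖V ω - x (k - j)‖ + ‖x (k - j)‖ := norm_add_le _ _
      _ ≤ s + 8 * s := add_le_add hωF (hxsmall (k - j) (by omega))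
      _ = 9 * s := by ring
    have hsplit : S k ω = S j ω + V ω := hSk_split j hjk ω
    have ht10 : t = 10 * s := by rw [hs_def]; ring
    have h1 : ‖S j ω‖ ≤ ‖S k ω‖ + ‖V ω‖ := by
      have h2 : S j ω = S k ω - V ω := by rw [hsplit]; abel
      rw [h2]
      exact norm_sub_le _ _
    rw [ht10] at hωA
    linarith
  have hprod : P (A ∩ F) = P A * P F := by
    have hA' : A = S j ⁻¹' {e : E | t < ‖e‖} := rfl
    have hF' : F = V ⁻¹' {e : E | ‖e - x (k - j)‖ ≤ s} := rfl
    rw [hA', hF']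
    exact hindepAF.measure_inter_preimage_eq_mul _ _
      (measurableSet_lt measurable_const measurable_norm)
      (measurableSet_le ((measurable_id.sub measurable_const).norm) measurable_const)
  have hfinal : P A * ((2:ℝ≥0∞)/3) ≤ α := by
    calc P A * ((2:ℝ≥0∞)/3) ≤ P A * P F := mul_le_mul_right hPF.le _
    _ = P (A ∩ F) := hprod.symm
    _ ≤ P {ω | s < ‖S k ω‖} := measure_mono hsub
    _ = α := hα_def.symm
  calc P A = P A * (((2:ℝ≥0∞)/3) * (3/2)) := by
        rw [show ((2:ℝ≥0∞)/3) * (3/2) = 1 by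
          rw [← mul_div_assoc, ENNReal.div_mul_cancel (by norm_num) (by norm_num)]
          exact ENNReal.div_self (by norm_num) (by norm_num)]
        rw [mul_one]
  _ = (P A * ((2:ℝ≥0∞)/3)) * (3/2) := by rw [mul_assoc]
  _ ≤ α * (3/2) := mul_le_mul_left hfinal _
  _ ≤ α * 3 := by
      apply mul_le_mul_right
      exact ENNReal.div_le_of_le_mul (le_mul_of_one_le_right (by norm_num) (by norm_num))
  _ = 3 * α := mul_comm _ _
end

section
/- Let $X_1, X_2, \dots$ be independent identically distributed random variables with values in a Banach space, with partial sums $S_j = \sum_{i=1}^j X_i$. Let $t > 0$ and $k \ge 1$, and suppose that for each $1 \le j \le k$ the partial sum $S_j$ has a $t$-concentration point $s_j$. Then for all $1 \le j \le k$, $\|k\, s_j - j\, s_k\| \le 3(k + j)t$. -/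
open MeasureTheory ProbabilityTheory
open scoped ENNReal

section Aux

variable {Ω Ω' : Type*} [MeasurableSpace Ω] [MeasurableSpace Ω']
  {E : Type*} [NormedAddCommGroup E] [MeasurableSpace E] [BorelSpace E]
  [SecondCountableTopology E]
  {μ : Measure Ω} {μ' : Measure Ω'} [IsProbabilityMeasure μ] [IsProbabilityMeasure μ']

/-- Sums of independent pairs with identically distributed components are
identically distributed. -/
lemma identDistrib_add' {f g : Ω → E} {f' g' : Ω' → E}
    (hf : Measurable f) (hg : Measurable g) (hf' : Measurable f') (hg' : Measurable g')
    (hfg : IndepFun f g μ) (hfg' : IndepFun f' g' μ')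
    (h1 : IdentDistrib f f' μ μ') (h2 : IdentDistrib g g' μ μ') :
    IdentDistrib (fun ω => f ω + g ω) (fun ω => f' ω + g' ω) μ μ' := by
  have hpair : IdentDistrib (fun ω => (f ω, g ω)) (fun ω => (f' ω, g' ω)) μ μ' := by
    refine ⟨(hf.prodMk hg).aemeasurable, (hf'.prodMk hg').aemeasurable, ?_⟩
    rw [(indepFun_iff_map_prod_eq_prod_map_map hf.aemeasurable hg.aemeasurable).1 hfg,
      (indepFun_iff_map_prod_eq_prod_map_map hf'.aemeasurable hg'.aemeasurable).1 hfg',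
      h1.map_eq, h2.map_eq]
  exact hpair.comp measurable_add

end Aux

section Shift

variable {Ω : Type*} [MeasurableSpace Ω] {P : Measure Ω} [IsProbabilityMeasure P]
  {E : Type*} [NormedAddCommGroup E] [MeasurableSpace E] [BorelSpace E]
  [SecondCountableTopology E]

/-- For i.i.d. random variables, block sums over shifted windows are identically
distributed with the initial partial sums. -/
lemma identDistrib_shift_sum (X : ℕ → Ω → E) (hmeas : ∀ i, Measurable (X i))
    (hindep : iIndepFun X P)
    (hident : ∀ i, IdentDistrib (X i) (X 0) P P) (a : ℕ) :
    ∀ b, IdentDistrib (fun ω => ∑ i ∈ Finset.range b, X (a + i) ω)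
      (fun ω => ∑ i ∈ Finset.range b, X i ω) P P := by
  intro b
  induction b with
  | zero =>
    simp only [Finset.range_zero, Finset.sum_empty]
    exact IdentDistrib.refl measurable_const.aemeasurable
  | succ b ih =>
    have hmf : Measurable (fun ω => ∑ i ∈ Finset.range b, X (a + i) ω) :=
      Finset.measurable_sum _ fun i _ => hmeas _
    have hmf' : Measurable (fun ω => ∑ i ∈ Finset.range b, X i ω) :=
      Finset.measurable_sum _ fun i _ => hmeas _
    have hrw : (fun ω => ∑ i ∈ Finset.range b, X (a + i) ω)
        = fun ω => ∑ j ∈ Finset.Ico a (a + b), X j ω := by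
      funext ω
      rw [Finset.sum_Ico_eq_sum_range]
      simp
    have hIndep1 : IndepFun (fun ω => ∑ i ∈ Finset.range b, X (a + i) ω) (X (a + b)) P := by
      rw [hrw]
      have h := hindep.indepFun_finset_sum_of_notMem hmeas
        (s := Finset.Ico a (a + b)) (i := a + b) (by simp)
      have : (∑ j ∈ Finset.Ico a (a + b), X j) = fun ω => ∑ j ∈ Finset.Ico a (a + b), X j ω := by
        funext ω; simp [Finset.sum_apply]
      rwa [this] at h
    have hIndep2 : IndepFun (fun ω => ∑ i ∈ Finset.range b, X i ω) (X b) P := by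
      have h := hindep.indepFun_finset_sum_of_notMem hmeas
        (s := Finset.range b) (i := b) (by simp)
      have : (∑ j ∈ Finset.range b, X j) = fun ω => ∑ j ∈ Finset.range b, X j ω := by
        funext ω; simp [Finset.sum_apply]
      rwa [this] at h
    have hident2 : IdentDistrib (X (a + b)) (X b) P P := (hident (a + b)).trans (hident b).symm
    have := identDistrib_add' hmf (hmeas (a + b)) hmf' (hmeas b) hIndep1 hIndep2 ih hident2
    simpa [Finset.sum_range_succ] using this

end Shift

/-- Approximate additivity of concentration points via a purely combinatorial induction. -/
lemma approx_linear {E : Type*} [NormedAddCommGroup E] [NormedSpace ℝ E]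
    (s : ℕ → E) {t : ℝ} (ht : 0 ≤ t) (k : ℕ)
    (hA : ∀ a b, 1 ≤ a → 1 ≤ b → a + b ≤ k → ‖s a + s b - s (a + b)‖ ≤ 3 * t) :
    ∀ n a b, 1 ≤ a → 1 ≤ b → a ≤ k → b ≤ k → a + b ≤ n →
      ‖(b : ℝ) • s a - (a : ℝ) • s b‖ ≤ 3 * ((a : ℝ) + (b : ℝ)) * t := by
  intro n
  induction n with
  | zero => intro a b ha hb _ _ hab; omega
  | succ n ih =>
    have key : ∀ a b : ℕ, 1 ≤ a → a < b → b ≤ k → a + b ≤ n + 1 →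
        ‖(b : ℝ) • s a - (a : ℝ) • s b‖ ≤ 3 * ((a : ℝ) + (b : ℝ)) * t := by
      intro a b ha hab hbk habn
      set c := b - a with hc
      have hc1 : 1 ≤ c := by omega
      have hac : a + c = b := by omega
      have hAbd : ‖s a + s c - s b‖ ≤ 3 * t := by
        have := hA a c ha hc1 (by omega)
        rwa [hac] at this
      have hIH : ‖(c : ℝ) • s a - (a : ℝ) • s c‖ ≤ 3 * ((a : ℝ) + (c : ℝ)) * t :=
        ih a c ha hc1 (by omega) (by omega) (by omega)
      have hdecomp : (b : ℝ) • s a - (a : ℝ) • s b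
          = ((c : ℝ) • s a - (a : ℝ) • s c) + (a : ℝ) • (s a + s c - s b) := by
        have hb' : (b : ℝ) = (a : ℝ) + (c : ℝ) := by
          rw [← hac]; push_cast; ring
        rw [hb']
        simp [smul_sub, smul_add, add_smul]
        abel
      rw [hdecomp]
      calc ‖((c : ℝ) • s a - (a : ℝ) • s c) + (a : ℝ) • (s a + s c - s b)‖
          ≤ ‖(c : ℝ) • s a - (a : ℝ) • s c‖ + ‖(a : ℝ) • (s a + s c - s b)‖ :=
            norm_add_le _ _
        _ ≤ 3 * ((a : ℝ) + (c : ℝ)) * t + (a : ℝ) * (3 * t) := by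
            refine add_le_add hIH ?_
            rw [norm_smul, Real.norm_natCast]
            exact mul_le_mul_of_nonneg_left hAbd (by positivity)
        _ = 3 * ((a : ℝ) + ((a : ℝ) + (c : ℝ))) * t := by ring
        _ = 3 * ((a : ℝ) + (b : ℝ)) * t := by
            have hb' : (b : ℝ) = (a : ℝ) + (c : ℝ) := by
              rw [← hac]; push_cast; ring
            rw [hb']
    intro a b ha hb hak hbk habn
    rcases lt_trichotomy a b with h | h | h
    · exact key a b ha h hbk habn
    · subst h
      simp only [sub_self, norm_zero]
      positivity
    · have := key b a hb h hak (by omega)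
      rw [norm_sub_rev] at this
      calc ‖(b : ℝ) • s a - (a : ℝ) • s b‖ ≤ 3 * ((b : ℝ) + (a : ℝ)) * t := this
        _ = 3 * ((a : ℝ) + (b : ℝ)) * t := by ring

/-- Corollary 3: if the partial sums `S_j` of i.i.d. random variables have
`t`-concentration points `s_j` for `1 ≤ j ≤ k`, then `‖k • s_j - j • s_k‖ ≤ 3(k+j)t`. -/
theorem concentration_points_partial_sums
    {Ω : Type*} [MeasurableSpace Ω] {P : Measure Ω} [IsProbabilityMeasure P]
    {E : Type*} [NormedAddCommGroup E] [NormedSpace ℝ E] [CompleteSpace E]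
    [MeasurableSpace E] [BorelSpace E] [SecondCountableTopology E]
    (X : ℕ → Ω → E) (hmeas : ∀ i, Measurable (X i))
    (hindep : iIndepFun X P)
    (hident : ∀ i, IdentDistrib (X i) (X 0) P P)
    {t : ℝ} (ht : 0 < t) {k : ℕ} (hk : 1 ≤ k) (s : ℕ → E)
    (hconc : ∀ j, 1 ≤ j → j ≤ k →
      (2 : ℝ≥0∞) / 3 < P {ω | ‖(∑ i ∈ Finset.range j, X i ω) - s j‖ ≤ t}) :
    ∀ j, 1 ≤ j → j ≤ k →
      ‖(k : ℝ) • s j - (j : ℝ) • s k‖ ≤ 3 * ((k : ℝ) + (j : ℝ)) * t := by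
  -- Step 1: approximate additivity of concentration points
  have hA : ∀ a b, 1 ≤ a → 1 ≤ b → a + b ≤ k → ‖s a + s b - s (a + b)‖ ≤ 3 * t := by
    intro a b ha hb hab
    -- the three events
    set A : Set Ω := {ω | ‖(∑ i ∈ Finset.range a, X i ω) - s a‖ ≤ t} with hA_def
    set B : Set Ω := {ω | ‖(∑ i ∈ Finset.Ico a (a + b), X i ω) - s b‖ ≤ t} with hB_def
    set C : Set Ω := {ω | ‖(∑ i ∈ Finset.range (a + b), X i ω) - s (a + b)‖ ≤ t} with hC_def
    have hmsum : ∀ u : Finset ℕ, Measurable (fun ω => ∑ i ∈ u, X i ω) :=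
      fun u => Finset.measurable_sum _ fun i _ => hmeas _
    have hmA : MeasurableSet A :=
      measurableSet_le (((hmsum _).sub measurable_const).norm) measurable_const
    have hmB : MeasurableSet B :=
      measurableSet_le (((hmsum _).sub measurable_const).norm) measurable_const
    have hmC : MeasurableSet C :=
      measurableSet_le (((hmsum _).sub measurable_const).norm) measurable_const
    have hPA : (2 : ℝ≥0∞) / 3 < P A := hconc a ha (by omega)
    have hPC : (2 : ℝ≥0∞) / 3 < P C := hconc (a + b) (by omega) hab
    have hPB : (2 : ℝ≥0∞) / 3 < P B := by
      have hid : IdentDistrib (fun ω => ∑ i ∈ Finset.Ico a (a + b), X i ω)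
          (fun ω => ∑ i ∈ Finset.range b, X i ω) P P := by
        have h := identDistrib_shift_sum X hmeas hindep hident a b
        have : (fun ω => ∑ i ∈ Finset.range b, X (a + i) ω)
            = fun ω => ∑ i ∈ Finset.Ico a (a + b), X i ω := by
          funext ω
          rw [Finset.sum_Ico_eq_sum_range]
          simp
        rwa [this] at h
      have hms : MeasurableSet {x : E | ‖x - s b‖ ≤ t} :=
        measurableSet_le ((measurable_id.sub measurable_const).norm) measurable_const
      have := hid.measure_mem_eq hms
      rw [hB_def]
      calc (2 : ℝ≥0∞) / 3 < P {ω | ‖(∑ i ∈ Finset.range b, X i ω) - s b‖ ≤ t} :=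
            hconc b hb (by omega)
        _ = P {ω | ‖(∑ i ∈ Finset.Ico a (a + b), X i ω) - s b‖ ≤ t} := this.symm
    -- the intersection is nonempty
    have hne : (A ∩ B ∩ C).Nonempty := by
      by_contra hem
      rw [Set.not_nonempty_iff_eq_empty] at hem
      have hcover : (Set.univ : Set Ω) ⊆ Aᶜ ∪ Bᶜ ∪ Cᶜ := by
        intro ω _
        by_contra hω
        simp only [Set.mem_union, Set.mem_compl_iff, not_or, not_not] at hω
        have : ω ∈ A ∩ B ∩ C := ⟨⟨hω.1.1, hω.1.2⟩, hω.2⟩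
        rw [hem] at this; exact this
      have h1 : (1 : ℝ≥0∞) ≤ P Aᶜ + P Bᶜ + P Cᶜ := by
        calc (1 : ℝ≥0∞) = P Set.univ := (measure_univ).symm
          _ ≤ P (Aᶜ ∪ Bᶜ ∪ Cᶜ) := measure_mono hcover
          _ ≤ P (Aᶜ ∪ Bᶜ) + P Cᶜ := measure_union_le _ _
          _ ≤ P Aᶜ + P Bᶜ + P Cᶜ := by
              gcongr
              exact measure_union_le _ _
      -- pass to real numbers
      have hfin : ∀ S : Set Ω, P S ≠ ∞ := fun S => measure_ne_top P S
      have h23 : ((2 : ℝ≥0∞) / 3).toReal = 2 / 3 := by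
        rw [ENNReal.toReal_div]; norm_num
      have hlt : ∀ S : Set Ω, MeasurableSet S → (2 : ℝ≥0∞) / 3 < P S →
          (P Sᶜ).toReal < 1 / 3 := by
        intro S hS hPS
        have hc : (P Sᶜ).toReal = 1 - (P S).toReal := by
          rw [measure_compl hS (hfin S), measure_univ,
            ENNReal.toReal_sub_of_le (prob_le_one) (by norm_num)]
          norm_num
        have : (2 : ℝ) / 3 < (P S).toReal := by
          rw [← h23]
          exact (ENNReal.toReal_lt_toReal
            (ENNReal.div_lt_top (by norm_num) (by norm_num)).ne (hfin S)).2 hPS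
        rw [hc]; linarith
      have hra : (P Aᶜ).toReal < 1 / 3 := hlt A hmA hPA
      have hrb : (P Bᶜ).toReal < 1 / 3 := hlt B hmB hPB
      have hrc : (P Cᶜ).toReal < 1 / 3 := hlt C hmC hPC
      have h1' : (1 : ℝ) ≤ (P Aᶜ).toReal + (P Bᶜ).toReal + (P Cᶜ).toReal := by
        have := ENNReal.toReal_mono (by
          exact ENNReal.add_ne_top.2 ⟨ENNReal.add_ne_top.2 ⟨hfin _, hfin _⟩, hfin _⟩) h1
        rwa [ENNReal.toReal_one, ENNReal.toReal_add (ENNReal.add_ne_top.2 ⟨hfin _, hfin _⟩)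
          (hfin _), ENNReal.toReal_add (hfin _) (hfin _)] at this
      linarith
    obtain ⟨ω, ⟨hωA, hωB⟩, hωC⟩ := hne
    simp only [hA_def, hB_def, hC_def, Set.mem_setOf_eq] at hωA hωB hωC
    have hsplit : (∑ i ∈ Finset.range a, X i ω) + (∑ i ∈ Finset.Ico a (a + b), X i ω)
        = ∑ i ∈ Finset.range (a + b), X i ω := by
      rw [Finset.range_eq_Ico, Finset.range_eq_Ico]
      exact Finset.sum_Ico_consecutive (fun i => X i ω) (Nat.zero_le a) (Nat.le_add_right a b)
    calc ‖s a + s b - s (a + b)‖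
        = ‖(s a - ∑ i ∈ Finset.range a, X i ω)
            + (s b - ∑ i ∈ Finset.Ico a (a + b), X i ω)
            + ((∑ i ∈ Finset.range (a + b), X i ω) - s (a + b))‖ := by
          rw [← hsplit]; congr 1; abel
      _ ≤ ‖s a - ∑ i ∈ Finset.range a, X i ω‖
            + ‖s b - ∑ i ∈ Finset.Ico a (a + b), X i ω‖
            + ‖(∑ i ∈ Finset.range (a + b), X i ω) - s (a + b)‖ :=
          norm_add₃_le
      _ ≤ t + t + t := by
          rw [norm_sub_rev (s a), norm_sub_rev (s b)]
          exact add_le_add (add_le_add hωA hωB) hωC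
      _ = 3 * t := by ring
  -- Step 2: combinatorial induction
  intro j hj hjk
  have := approx_linear s ht.le k hA (k + j) j k hj hk hjk le_rfl (by omega)
  calc ‖(k : ℝ) • s j - (j : ℝ) • s k‖ ≤ 3 * ((j : ℝ) + (k : ℝ)) * t := this
    _ = 3 * ((k : ℝ) + (j : ℝ)) * t := by ring
end

section
/- Let $X_1, X_2, \dots$ be independent identically distributed random variables with values in a Banach space, with partial sums $S_j = \sum_{i=1}^j X_i$. Let $t > 0$ and $k \ge 1$, and suppose that for each $1 \le j \le k$ the partial sum $S_j$ has a $t$-concentration point $s_j$. Then for all $1 \le j \le k$, $\|k\, s_j - j\, s_k\| \le 3(j + k - 2h)t$, where $h$ is the greatest common divisor of $j$ and $k$. -/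
open MeasureTheory ProbabilityTheory
open scoped ENNReal

section Aux

variable {Ω Ω' : Type*} [MeasurableSpace Ω] [MeasurableSpace Ω']

/-- If `U ⟂ V`, `U' ⟂ V'`, `U ~ U'`, `V ~ V'`, then `U + V ~ U' + V'`. -/
lemma identDistrib_add_of_indepFun {E : Type*} [MeasurableSpace E] [AddMonoid E]
    [MeasurableAdd₂ E] {μ : Measure Ω} {ν : Measure Ω'}
    [IsFiniteMeasure μ] [IsFiniteMeasure ν]
    {U V : Ω → E} {U' V' : Ω' → E}
    (hUV : IndepFun U V μ) (hUV' : IndepFun U' V' ν)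
    (hU : IdentDistrib U U' μ ν) (hV : IdentDistrib V V' μ ν) :
    IdentDistrib (fun ω => U ω + V ω) (fun ω => U' ω + V' ω) μ ν := by
  have hpair : IdentDistrib (fun ω => (U ω, V ω)) (fun ω => (U' ω, V' ω)) μ ν := by
    refine ⟨(hU.aemeasurable_fst.prodMk hV.aemeasurable_fst),
      (hU.aemeasurable_snd.prodMk hV.aemeasurable_snd), ?_⟩
    rw [(indepFun_iff_map_prod_eq_prod_map_map hU.aemeasurable_fst hV.aemeasurable_fst).1 hUV,
      (indepFun_iff_map_prod_eq_prod_map_map hU.aemeasurable_snd hV.aemeasurable_snd).1 hUV',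
      hU.map_eq, hV.map_eq]
  exact hpair.comp measurable_add

/-- Block sums of i.i.d. random variables are identically distributed with initial sums. -/
lemma identDistrib_block_sum {E : Type*} [NormedAddCommGroup E]
    [MeasurableSpace E] [BorelSpace E] [SecondCountableTopology E]
    {P : Measure Ω} [IsProbabilityMeasure P]
    (X : ℕ → Ω → E) (hmeas : ∀ i, Measurable (X i))
    (hindep : iIndepFun X P)
    (hident : ∀ i, IdentDistrib (X i) (X 0) P P) (a b : ℕ) :
    IdentDistrib (fun ω => ∑ i ∈ Finset.range b, X (a + i) ω)
      (fun ω => ∑ i ∈ Finset.range b, X i ω) P P := by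
  induction b with
  | zero =>
      simp only [Finset.range_zero, Finset.sum_empty]
      exact IdentDistrib.refl aemeasurable_const
  | succ b ih =>
      have hXid : ∀ i j : ℕ, IdentDistrib (X i) (X j) P P := fun i j =>
        (hident i).trans (hident j).symm
      -- independence of the block sum and the next term
      have h1 : IndepFun (fun ω => ∑ i ∈ Finset.range b, X (a + i) ω) (X (a + b)) P := by
        have hs : (a + b) ∉ (Finset.range b).image (a + ·) := by
          simp only [Finset.mem_image, Finset.mem_range]
          rintro ⟨i, hi, hie⟩; omega
        have := hindep.indepFun_finset_sum_of_notMem hmeas hs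
        have heq : (∑ j ∈ (Finset.range b).image (a + ·), X j)
            = fun ω => ∑ i ∈ Finset.range b, X (a + i) ω := by
          funext ω
          rw [Finset.sum_apply]
          exact Finset.sum_image (fun x _ y _ h => by omega)
        rwa [heq] at this
      have h2 : IndepFun (fun ω => ∑ i ∈ Finset.range b, X i ω) (X b) P := by
        have := hindep.indepFun_sum_range_succ hmeas b
        have heq : (∑ j ∈ Finset.range b, X j) = fun ω => ∑ i ∈ Finset.range b, X i ω := by
          funext ω; rw [Finset.sum_apply]
        rwa [heq] at this
      have hsum := identDistrib_add_of_indepFun h1 h2 ih (hXid (a + b) b)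
      have e1 : (fun ω => (∑ i ∈ Finset.range b, X (a + i) ω) + X (a + b) ω)
          = fun ω => ∑ i ∈ Finset.range (b + 1), X (a + i) ω := by
        funext ω; rw [Finset.sum_range_succ]
      have e2 : (fun ω => (∑ i ∈ Finset.range b, X i ω) + X b ω)
          = fun ω => ∑ i ∈ Finset.range (b + 1), X i ω := by
        funext ω; rw [Finset.sum_range_succ]
      rw [e1, e2] at hsum
      exact hsum

/-- The purely arithmetic induction: from approximate additivity of `s` up to `k` we get the
gcd bound. -/
lemma arith_gcd_bound {E : Type*} [NormedAddCommGroup E] [NormedSpace ℝ E]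
    (k : ℕ) (s : ℕ → E) (c : ℝ)
    (H : ∀ a b, 1 ≤ a → 1 ≤ b → a + b ≤ k → ‖s (a + b) - (s a + s b)‖ ≤ c) :
    ∀ n j m, j + m ≤ n → 1 ≤ j → 1 ≤ m → j ≤ k → m ≤ k →
      ‖(m : ℝ) • s j - (j : ℝ) • s m‖ ≤ ((j : ℝ) + (m : ℝ) - 2 * (Nat.gcd j m : ℝ)) * c := by
  intro n
  induction n with
  | zero => intro j m h h1 h2 _ _; omega
  | succ n ih =>
    intro j m hsum h1j h1m hjk hmk
    rcases lt_trichotomy j m with hlt | heq | hgt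
    · -- j < m
      have hrec := ih j (m - j) (by omega) h1j (by omega) hjk (by omega)
      have hH := H j (m - j) h1j (by omega) (by omega)
      rw [show j + (m - j) = m by omega] at hH
      have key : (m : ℝ) • s j - (j : ℝ) • s m
          = (((m - j : ℕ) : ℝ) • s j - (j : ℝ) • s (m - j))
            + (j : ℝ) • ((s j + s (m - j)) - s m) := by
        have : ((m - j : ℕ) : ℝ) = (m : ℝ) - (j : ℝ) := by
          push_cast [Nat.cast_sub hlt.le]; ring
        rw [this]
        module
      rw [key]
      calc ‖_ + _‖ ≤ ‖((m - j : ℕ) : ℝ) • s j - (j : ℝ) • s (m - j)‖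
            + ‖(j : ℝ) • ((s j + s (m - j)) - s m)‖ := norm_add_le _ _
        _ ≤ ((j : ℝ) + ((m - j : ℕ) : ℝ) - 2 * (Nat.gcd j (m - j) : ℝ)) * c + (j : ℝ) * c := by
            refine add_le_add hrec ?_
            rw [norm_smul, Real.norm_natCast]
            refine mul_le_mul_of_nonneg_left ?_ (by positivity)
            rw [show (s j + s (m - j)) - s m = -(s m - (s j + s (m - j))) by abel, norm_neg]
            exact hH
        _ = ((j : ℝ) + (m : ℝ) - 2 * (Nat.gcd j m : ℝ)) * c := by
            rw [Nat.gcd_sub_self_right hlt.le]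
            have : ((m - j : ℕ) : ℝ) = (m : ℝ) - (j : ℝ) := by
              push_cast [Nat.cast_sub hlt.le]; ring
            rw [this]; ring
    · subst heq
      rw [Nat.gcd_self, sub_self, norm_zero]
      have : ((j : ℝ) + (j : ℝ) - 2 * (j : ℝ)) * c = 0 := by ring
      rw [this]
    · -- m < j
      have hrec := ih (j - m) m (by omega) (by omega) h1m (by omega) hmk
      have hH := H m (j - m) h1m (by omega) (by omega)
      rw [show m + (j - m) = j by omega] at hH
      have key : (m : ℝ) • s j - (j : ℝ) • s m
          = ((m : ℝ) • s (j - m) - ((j - m : ℕ) : ℝ) • s m)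
            + (m : ℝ) • (s j - (s m + s (j - m))) := by
        have : ((j - m : ℕ) : ℝ) = (j : ℝ) - (m : ℝ) := by
          push_cast [Nat.cast_sub hgt.le]; ring
        rw [this]
        module
      rw [key]
      have hrec' : ‖(m : ℝ) • s (j - m) - ((j - m : ℕ) : ℝ) • s m‖
          ≤ (((j - m : ℕ) : ℝ) + (m : ℝ) - 2 * (Nat.gcd (j - m) m : ℝ)) * c := hrec
      calc ‖_ + _‖ ≤ ‖(m : ℝ) • s (j - m) - ((j - m : ℕ) : ℝ) • s m‖
            + ‖(m : ℝ) • (s j - (s m + s (j - m)))‖ := norm_add_le _ _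
        _ ≤ (((j - m : ℕ) : ℝ) + (m : ℝ) - 2 * (Nat.gcd (j - m) m : ℝ)) * c
            + (m : ℝ) * c := by
            refine add_le_add hrec' ?_
            rw [norm_smul, Real.norm_natCast]
            exact mul_le_mul_of_nonneg_left hH (by positivity)
        _ = ((j : ℝ) + (m : ℝ) - 2 * (Nat.gcd j m : ℝ)) * c := by
            have hg : Nat.gcd (j - m) m = Nat.gcd j m := by
              rw [Nat.gcd_comm (j - m) m, Nat.gcd_sub_self_right hgt.le, Nat.gcd_comm]
            rw [hg]
            have : ((j - m : ℕ) : ℝ) = (j : ℝ) - (m : ℝ) := by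
              push_cast [Nat.cast_sub hgt.le]; ring
            rw [this]; ring

end Aux

/-- The refinement of Corollary 3 noted in the paper: if the partial sums `S_j` of i.i.d.
random variables have `t`-concentration points `s_j` for `1 ≤ j ≤ k`, then
`‖k • s_j - j • s_k‖ ≤ 3(j + k - 2h)t`, where `h = gcd(j, k)`. -/
theorem concentration_points_partial_sums_gcd
    {Ω : Type*} [MeasurableSpace Ω] {P : Measure Ω} [IsProbabilityMeasure P]
    {E : Type*} [NormedAddCommGroup E] [NormedSpace ℝ E] [CompleteSpace E]
    [MeasurableSpace E] [BorelSpace E] [SecondCountableTopology E]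
    (X : ℕ → Ω → E) (hmeas : ∀ i, Measurable (X i))
    (hindep : iIndepFun X P)
    (hident : ∀ i, IdentDistrib (X i) (X 0) P P)
    {t : ℝ} (ht : 0 < t) {k : ℕ} (hk : 1 ≤ k) (s : ℕ → E)
    (hconc : ∀ j, 1 ≤ j → j ≤ k →
      (2 : ℝ≥0∞) / 3 < P {ω | ‖(∑ i ∈ Finset.range j, X i ω) - s j‖ ≤ t}) :
    ∀ j, 1 ≤ j → j ≤ k →
      ‖(k : ℝ) • s j - (j : ℝ) • s k‖ ≤
        3 * ((j : ℝ) + (k : ℝ) - 2 * (Nat.gcd j k : ℝ)) * t := by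
  have hSmeas : ∀ a b : ℕ, Measurable fun ω => ∑ i ∈ Finset.range b, X (a + i) ω :=
    fun a b => Finset.measurable_sum _ fun i _ => hmeas (a + i)
  -- key probabilistic step: approximate additivity
  have H : ∀ a b, 1 ≤ a → 1 ≤ b → a + b ≤ k → ‖s (a + b) - (s a + s b)‖ ≤ 3 * t := by
    intro a b ha hb hab
    set A := {ω | ‖(∑ i ∈ Finset.range a, X i ω) - s a‖ ≤ t} with hA
    set B := {ω | ‖(∑ i ∈ Finset.range b, X (a + i) ω) - s b‖ ≤ t} with hB
    set C := {ω | ‖(∑ i ∈ Finset.range (a + b), X i ω) - s (a + b)‖ ≤ t} with hC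
    have measA : MeasurableSet A :=
      measurableSet_le (((Finset.measurable_sum _ fun i _ => hmeas i).sub
        measurable_const).norm) measurable_const
    have measB : MeasurableSet B :=
      measurableSet_le (((hSmeas a b).sub measurable_const).norm) measurable_const
    have measC : MeasurableSet C :=
      measurableSet_le (((Finset.measurable_sum _ fun i _ => hmeas i).sub
        measurable_const).norm) measurable_const
    have hPA : (2 : ℝ≥0∞) / 3 < P A := hconc a ha (by omega)
    have hPC : (2 : ℝ≥0∞) / 3 < P C := hconc (a + b) (by omega) hab
    have hPB : (2 : ℝ≥0∞) / 3 < P B := by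
      have hid := identDistrib_block_sum X hmeas hindep hident a b
      have hset : MeasurableSet {x : E | ‖x - s b‖ ≤ t} :=
        measurableSet_le ((measurable_id.sub measurable_const).norm) measurable_const
      have := hid.measure_mem_eq hset
      have hBeq : B = (fun ω => ∑ i ∈ Finset.range b, X (a + i) ω) ⁻¹' {x | ‖x - s b‖ ≤ t} :=
        rfl
      rw [hBeq, this]
      exact hconc b hb (by omega)
    -- the three events intersect
    have hthird : ∀ {D : Set Ω}, MeasurableSet D → (2 : ℝ≥0∞) / 3 < P D → P Dᶜ < 1 / 3 := by
      intro D hD hPD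
      rw [prob_compl_eq_one_sub hD]
      refine ENNReal.sub_lt_of_lt_add prob_le_one ?_
      have h1 : (1 : ℝ≥0∞) = 1 / 3 + 2 / 3 := by
        rw [ENNReal.div_add_div_same, show (1:ℝ≥0∞) + 2 = 3 by norm_num]
        exact (ENNReal.div_self (by norm_num : (3:ℝ≥0∞) ≠ 0) (by norm_num : (3:ℝ≥0∞) ≠ ∞)).symm
      conv_lhs => rw [h1]
      exact ENNReal.add_lt_add_left (by norm_num : (1/3 : ℝ≥0∞) ≠ ⊤) hPD
    have hinter : (A ∩ B ∩ C).Nonempty := by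
      by_contra hempty
      rw [Set.not_nonempty_iff_eq_empty] at hempty
      have huniv : Aᶜ ∪ Bᶜ ∪ Cᶜ = Set.univ := by
        rw [← Set.compl_inter, ← Set.compl_inter, ← Set.compl_empty]
        rw [hempty]
      have hle : P (Aᶜ ∪ Bᶜ ∪ Cᶜ) ≤ P Aᶜ + P Bᶜ + P Cᶜ :=
        le_trans (measure_union_le _ _) (add_le_add_left (measure_union_le _ _) _)
      have hlt : P Aᶜ + P Bᶜ + P Cᶜ < 1 / 3 + 1 / 3 + 1 / 3 :=
        ENNReal.add_lt_add (ENNReal.add_lt_add (hthird measA hPA) (hthird measB hPB))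
          (hthird measC hPC)
      have : (1 / 3 : ℝ≥0∞) + 1 / 3 + 1 / 3 = 1 := by
        rw [ENNReal.div_add_div_same, ENNReal.div_add_div_same,
          show (1:ℝ≥0∞) + 1 + 1 = 3 by norm_num]
        exact ENNReal.div_self (by norm_num : (3:ℝ≥0∞) ≠ 0) (by norm_num : (3:ℝ≥0∞) ≠ ∞)
      rw [huniv, measure_univ] at hle
      rw [this] at hlt
      exact absurd (lt_of_le_of_lt hle hlt) (lt_irrefl _)
    obtain ⟨ω, ⟨hωA, hωB⟩, hωC⟩ := hinter
    have hsplit : ∑ i ∈ Finset.range (a + b), X i ω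
        = (∑ i ∈ Finset.range a, X i ω) + ∑ i ∈ Finset.range b, X (a + i) ω :=
      Finset.sum_range_add (fun i => X i ω) a b
    have key : s (a + b) - (s a + s b)
        = (s (a + b) - ∑ i ∈ Finset.range (a + b), X i ω)
          + ((∑ i ∈ Finset.range a, X i ω) - s a)
          + ((∑ i ∈ Finset.range b, X (a + i) ω) - s b) := by
      rw [hsplit]; abel
    rw [key]
    calc ‖_ + _ + _‖ ≤ ‖(s (a + b) - ∑ i ∈ Finset.range (a + b), X i ω)
          + ((∑ i ∈ Finset.range a, X i ω) - s a)‖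
          + ‖(∑ i ∈ Finset.range b, X (a + i) ω) - s b‖ := norm_add_le _ _
      _ ≤ ‖s (a + b) - ∑ i ∈ Finset.range (a + b), X i ω‖
          + ‖(∑ i ∈ Finset.range a, X i ω) - s a‖
          + ‖(∑ i ∈ Finset.range b, X (a + i) ω) - s b‖ :=
        add_le_add_left (norm_add_le _ _) _
      _ ≤ t + t + t := by
          refine add_le_add (add_le_add ?_ hωA) hωB
          rw [norm_sub_rev]
          exact hωC
      _ = 3 * t := by ring
  intro j h1j hjk
  have := arith_gcd_bound k s (3 * t) H (j + k) j k (le_refl _) h1j hk hjk (le_refl _)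
  calc ‖(k : ℝ) • s j - (j : ℝ) • s k‖
      ≤ ((j : ℝ) + (k : ℝ) - 2 * (Nat.gcd j k : ℝ)) * (3 * t) := this
    _ = 3 * ((j : ℝ) + (k : ℝ) - 2 * (Nat.gcd j k : ℝ)) * t := by ring
end

section
/- There is a universal constant $c > 0$ such that for every sequence $X_1, X_2, \dots$ of independent identically distributed random variables with values in a Banach space, with partial sums $S_j = \sum_{i=1}^j X_i$, every $k \ge 1$, and every $t > 0$, $\Pr\big(\sup_{1 \le j \le k} \|S_j\| > t\big) \le c\, \Pr(\|S_k\| > t/c)$. -/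
open MeasureTheory ProbabilityTheory
open scoped ENNReal




lemma exists_le_lintegral_aux {α : Type*} [MeasurableSpace α] (ν : Measure α)
    [IsProbabilityMeasure ν] {h : α → ℝ≥0∞} (hm : AEMeasurable h ν)
    (hfin : ∫⁻ z, h z ∂ν ≠ ⊤) : ∃ z, h z ≤ ∫⁻ z, h z ∂ν := by
  by_contra hcon
  push_neg at hcon
  have hne : ν ≠ 0 := IsProbabilityMeasure.ne_zero ν
  have h2 : (∫⁻ _, (∫⁻ z, h z ∂ν) ∂ν) < ∫⁻ z, h z ∂ν := by
    refine lintegral_strict_mono hne hm ?_ (ae_of_all _ hcon)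
    simpa [lintegral_const] using hfin
  simp [lintegral_const] at h2


lemma quasi_norm_bound {E : Type*} [NormedAddCommGroup E] [NormedSpace ℝ E]
    (n : ℕ) (hn : 1 ≤ n) (c : ℕ → E) (δ : ℝ) (hδ : 0 ≤ δ) (h0 : c 0 = 0)
    (hq : ∀ j k, j + k ≤ n → ‖c (j + k) - c j - c k‖ ≤ δ) :
    ∀ k, k ≤ n → ‖c k‖ ≤ ‖c n‖ + 4 * δ := by
  have hn0 : 0 < n := hn
  set cext : ℕ → E := fun m => ((m / n : ℕ) : ℝ) • c n + c (m % n) with hcext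
  have hext_eq : ∀ m, m ≤ n → cext m = c m := by
    intro m hm
    rcases eq_or_lt_of_le hm with rfl | hlt
    · simp [hcext, Nat.div_self hn0, Nat.mod_self, h0]
    · simp [hcext, Nat.div_eq_of_lt hlt, Nat.mod_eq_of_lt hlt]
  have hD : ∀ j k, ‖cext (j + k) - cext j - cext k‖ ≤ 2 * δ := by
    intro j k
    set q₁ := j / n with hq₁; set q₂ := k / n with hq₂
    set s₁ := j % n with hs₁; set s₂ := k % n with hs₂
    have hjs : j = n * q₁ + s₁ := (Nat.div_add_mod j n).symm
    have hks : k = n * q₂ + s₂ := (Nat.div_add_mod k n).symm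
    have hs₁n : s₁ < n := Nat.mod_lt _ hn0
    have hs₂n : s₂ < n := Nat.mod_lt _ hn0
    by_cases h : s₁ + s₂ < n
    · have e : j + k = n * (q₁ + q₂) + (s₁ + s₂) := by rw [hjs, hks]; ring
      have hdiv : (j + k) / n = q₁ + q₂ := by
        rw [e, Nat.mul_add_div hn0, Nat.div_eq_of_lt h, add_zero]
      have hmod : (j + k) % n = s₁ + s₂ := by
        rw [e, Nat.mul_add_mod, Nat.mod_eq_of_lt h]
      have e2 : cext (j + k) - cext j - cext k = c (s₁ + s₂) - c s₁ - c s₂ := by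
        simp only [hcext, hdiv, hmod]
        push_cast
        rw [add_smul]
        abel
      rw [e2]
      have := hq s₁ s₂ (le_of_lt h)
      linarith
    · push_neg at h
      set s := s₁ + s₂ - n with hs
      have hss : s₁ + s₂ = n + s := by omega
      have hsn : s < n := by omega
      have hss₁ : s ≤ s₁ := by omega
      have e : j + k = n * (q₁ + q₂ + 1) + s := by
        rw [hjs, hks]
        calc n * q₁ + s₁ + (n * q₂ + s₂) = n * q₁ + n * q₂ + (s₁ + s₂) := by ring
        _ = n * q₁ + n * q₂ + (n + s) := by rw [hss]
        _ = n * (q₁ + q₂ + 1) + s := by ring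
      have hdiv : (j + k) / n = q₁ + q₂ + 1 := by
        rw [e, Nat.mul_add_div hn0, Nat.div_eq_of_lt hsn, add_zero]
      have hmod : (j + k) % n = s := by
        rw [e, Nat.mul_add_mod, Nat.mod_eq_of_lt hsn]
      have e2 : cext (j + k) - cext j - cext k = c n + c s - c s₁ - c s₂ := by
        simp only [hcext, hdiv, hmod]
        push_cast
        rw [add_smul, add_smul, one_smul]
        abel
      rw [e2]
      have h1 : ‖c n - c (s₁ - s) - c s₂‖ ≤ δ := by
        have := hq (s₁ - s) s₂ (by omega)
        rwa [show s₁ - s + s₂ = n by omega] at this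
      have h2 : ‖c s₁ - c s - c (s₁ - s)‖ ≤ δ := by
        have := hq s (s₁ - s) (by omega)
        rwa [show s + (s₁ - s) = s₁ by omega] at this
      have e3 : c n + c s - c s₁ - c s₂
          = (c n - c (s₁ - s) - c s₂) - (c s₁ - c s - c (s₁ - s)) := by abel
      rw [e3]
      calc ‖(c n - c (s₁ - s) - c s₂) - (c s₁ - c s - c (s₁ - s))‖
          ≤ ‖c n - c (s₁ - s) - c s₂‖ + ‖c s₁ - c s - c (s₁ - s)‖ := norm_sub_le _ _
        _ ≤ 2 * δ := by linarith
  have hc0' : cext 0 = 0 := by simp [hcext, Nat.zero_div, Nat.zero_mod, h0]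
  have hmul : ∀ a b : ℕ, ‖cext (a * b) - (a : ℝ) • cext b‖ ≤ (a : ℝ) * (2 * δ) := by
    intro a b
    induction a with
    | zero => simp [hc0']
    | succ a ih =>
      have h1 := hD (a * b) b
      have e : cext ((a + 1) * b) - ((a + 1 : ℕ) : ℝ) • cext b
          = (cext (a * b + b) - cext (a * b) - cext b) + (cext (a * b) - (a : ℝ) • cext b) := by
        rw [Nat.succ_mul]
        push_cast
        rw [add_smul, one_smul]
        abel
      rw [e]
      calc ‖(cext (a * b + b) - cext (a * b) - cext b) + (cext (a * b) - (a : ℝ) • cext b)‖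
          ≤ ‖cext (a * b + b) - cext (a * b) - cext b‖ + ‖cext (a * b) - (a : ℝ) • cext b‖ :=
            norm_add_le _ _
        _ ≤ ((a + 1 : ℕ) : ℝ) * (2 * δ) := by push_cast; linarith
  intro k hk
  have e1 : cext n = c n := hext_eq n le_rfl
  have e2 : cext k = c k := hext_eq k hk
  have h1 := hmul k n
  have h2 := hmul n k
  rw [e1] at h1; rw [e2] at h2
  rw [show n * k = k * n from Nat.mul_comm n k] at h2
  have htot : ‖(n : ℝ) • c k - (k : ℝ) • c n‖ ≤ ((k : ℝ) + n) * (2 * δ) := by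
    have e3 : (n : ℝ) • c k - (k : ℝ) • c n
        = (cext (k * n) - (k : ℝ) • c n) - (cext (k * n) - (n : ℝ) • c k) := by abel
    rw [e3]
    calc ‖(cext (k * n) - (k : ℝ) • c n) - (cext (k * n) - (n : ℝ) • c k)‖
        ≤ ‖cext (k * n) - (k : ℝ) • c n‖ + ‖cext (k * n) - (n : ℝ) • c k‖ := norm_sub_le _ _
      _ ≤ ((k : ℝ) + n) * (2 * δ) := by linarith
  have hkn : (k : ℝ) ≤ n := by exact_mod_cast hk
  have hnpos : (0 : ℝ) < n := by exact_mod_cast hn0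
  have hnorm1 : ‖(n : ℝ) • c k‖ = (n : ℝ) * ‖c k‖ := by
    rw [norm_smul, Real.norm_eq_abs, abs_of_nonneg (le_of_lt hnpos)]
  have hnorm2 : ‖(k : ℝ) • c n‖ = (k : ℝ) * ‖c n‖ := by
    rw [norm_smul, Real.norm_eq_abs, abs_of_nonneg (Nat.cast_nonneg k)]
  have hfin : (n : ℝ) * ‖c k‖ ≤ (n : ℝ) * (‖c n‖ + 4 * δ) := by
    calc (n : ℝ) * ‖c k‖ = ‖(n : ℝ) • c k‖ := hnorm1.symm
      _ ≤ ‖(k : ℝ) • c n‖ + ‖(n : ℝ) • c k - (k : ℝ) • c n‖ := by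
          have := norm_add_le ((k : ℝ) • c n) ((n : ℝ) • c k - (k : ℝ) • c n)
          simpa using this
      _ ≤ (k : ℝ) * ‖c n‖ + ((k : ℝ) + n) * (2 * δ) := by rw [hnorm2]; linarith
      _ ≤ (n : ℝ) * ‖c n‖ + (n + n) * (2 * δ) := by
          have h5 : (0:ℝ) ≤ ‖c n‖ := norm_nonneg _
          nlinarith
      _ = (n : ℝ) * (‖c n‖ + 4 * δ) := by ring
  exact le_of_mul_le_mul_left hfin hnpos

/-- Corollary 4: there is a universal constant `c > 0` such that for i.i.d. Banach-space
valued random variables with partial sums `S_j`, every `k ≥ 1` and `t > 0`,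
`P(sup_{1 ≤ j ≤ k} ‖S_j‖ > t) ≤ c P(‖S_k‖ > t/c)`. -/
theorem maximal_inequality_iid :
    ∃ c : ℝ, 0 < c ∧
      ∀ (Ω : Type) (_ : MeasurableSpace Ω) (P : Measure Ω), IsProbabilityMeasure P →
      ∀ (E : Type) [NormedAddCommGroup E] [NormedSpace ℝ E] [CompleteSpace E]
        [MeasurableSpace E] [BorelSpace E] [SecondCountableTopology E]
        (X : ℕ → Ω → E), (∀ i, Measurable (X i)) →
        iIndepFun X P →
        (∀ i, IdentDistrib (X i) (X 0) P P) →
        ∀ (k : ℕ), 1 ≤ k → ∀ (t : ℝ), 0 < t →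
          P {ω | ∃ j, 1 ≤ j ∧ j ≤ k ∧ t < ‖∑ i ∈ Finset.range j, X i ω‖} ≤
            ENNReal.ofReal c * P {ω | t / c < ‖∑ i ∈ Finset.range k, X i ω‖} := by
  refine ⟨16, by norm_num, ?_⟩
  intro Ω mΩ P hP E _ _ _ _ _ _ X hX hindep hid n hn t ht
  classical
  have hSmeas : ∀ s : Finset ℕ, Measurable fun ω => ∑ i ∈ s, X i ω :=
    fun s => Finset.measurable_sum s (fun i _ => hX i)
  -- independence of sums over disjoint finsets
  have hsum_indep : ∀ S T : Finset ℕ, Disjoint S T →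
      IndepFun (fun ω => ∑ i ∈ S, X i ω) (fun ω => ∑ i ∈ T, X i ω) P := by
    intro S T hST
    have h := hindep.indepFun_finset S T hST hX
    have hmS : Measurable fun v : {x // x ∈ S} → E => ∑ i ∈ S.attach, v i :=
      Finset.measurable_sum S.attach (fun i _ => measurable_pi_apply i)
    have hmT : Measurable fun v : {x // x ∈ T} → E => ∑ i ∈ T.attach, v i :=
      Finset.measurable_sum T.attach (fun i _ => measurable_pi_apply i)
    have h2 := h.comp hmS hmT
    have eS : ((fun v : {x // x ∈ S} → E => ∑ i ∈ S.attach, v i)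
        ∘ fun ω (i : {x // x ∈ S}) => X i ω) = fun ω => ∑ i ∈ S, X i ω := by
      funext ω
      simp only [Function.comp_apply]
      exact Finset.sum_attach S (fun i => X i ω)
    have eT : ((fun v : {x // x ∈ T} → E => ∑ i ∈ T.attach, v i)
        ∘ fun ω (i : {x // x ∈ T}) => X i ω) = fun ω => ∑ i ∈ T, X i ω := by
      funext ω
      simp only [Function.comp_apply]
      exact Finset.sum_attach T (fun i => X i ω)
    rwa [eS, eT] at h2
  -- law of a sum of two independent rv's as function of the product of laws
  have key : ∀ (f g : Ω → E), Measurable f → Measurable g → IndepFun f g P →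
      Measure.map (fun ω => f ω + g ω) P
        = Measure.map (fun p : E × E => p.1 + p.2) ((Measure.map f P).prod (Measure.map g P)) := by
    intro f g hf hg hfg
    rw [← (indepFun_iff_map_prod_eq_prod_map_map hf.aemeasurable hg.aemeasurable).mp hfg,
      Measure.map_map (g := fun p : E × E => p.1 + p.2) (measurable_fst.add measurable_snd) (hf.prodMk hg)]
    rfl
  -- law of block sums only depends on length
  have hlaw : ∀ k a, Measure.map (fun ω => ∑ i ∈ Finset.Ico a (a + k), X i ω) P
      = Measure.map (fun ω => ∑ i ∈ Finset.range k, X i ω) P := by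
    intro k
    induction k with
    | zero => intro a; simp
    | succ k ih =>
      intro a
      have e1 : (fun ω => ∑ i ∈ Finset.Ico a (a + (k + 1)), X i ω)
          = fun ω => (∑ i ∈ Finset.Ico a (a + k), X i ω) + X (a + k) ω := by
        funext ω
        rw [show a + (k + 1) = (a + k) + 1 from rfl,
          Finset.sum_Ico_succ_top (Nat.le_add_right a k)]
      have e2 : (fun ω => ∑ i ∈ Finset.range (k + 1), X i ω)
          = fun ω => (∑ i ∈ Finset.range k, X i ω) + X k ω := by
        funext ω; rw [Finset.sum_range_succ]
      have i1 : IndepFun (fun ω => ∑ i ∈ Finset.Ico a (a + k), X i ω) (X (a + k)) P := by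
        have h := hsum_indep (Finset.Ico a (a + k)) {a + k}
          (by simp [Finset.disjoint_left, Finset.mem_Ico]; omega)
        simpa using h
      have i2 : IndepFun (fun ω => ∑ i ∈ Finset.range k, X i ω) (X k) P := by
        have h := hsum_indep (Finset.range k) {k}
          (by simp [Finset.disjoint_left, Finset.mem_range]; omega)
        simpa using h
      have hXlaw : Measure.map (X (a + k)) P = Measure.map (X k) P :=
        (hid (a + k)).map_eq.trans (hid k).map_eq.symm
      rw [e1, e2, key _ _ (hSmeas _) (hX _) i1, key _ _ (hSmeas _) (hX _) i2, ih a, hXlaw]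
  -- transfer events between blocks
  have hblockP : ∀ a k (A : Set E), MeasurableSet A →
      P ((fun ω => ∑ i ∈ Finset.Ico a (a + k), X i ω) ⁻¹' A)
        = P ((fun ω => ∑ i ∈ Finset.range k, X i ω) ⁻¹' A) := by
    intro a k A hA
    rw [← Measure.map_apply (hSmeas _) hA, ← Measure.map_apply (hSmeas _) hA, hlaw]
  -- case split on size of ε
  set t₀ := t / 16 with ht₀def
  have ht₀ : 0 < t₀ := by positivity
  set ε := P {ω | t₀ < ‖∑ i ∈ Finset.range n, X i ω‖} with hεdef
  have hofReal : ENNReal.ofReal (16:ℝ) = (16:ℝ≥0∞) := by norm_num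
  by_cases hcase : ε + ε + ε + ε < 1
  swap
  · push_neg at hcase
    calc P {ω | ∃ j, 1 ≤ j ∧ j ≤ n ∧ t < ‖∑ i ∈ Finset.range j, X i ω‖} ≤ 1 := prob_le_one
      _ ≤ ε + ε + ε + ε := hcase
      _ ≤ 16 * ε := by
          have : ε + ε + ε + ε = 4 * ε := by ring
          rw [this]
          exact mul_le_mul_left (by norm_num) ε
      _ = ENNReal.ofReal 16 * ε := by rw [hofReal]
  · -- main case
    have hεεε : ε + ε + ε < 1 := lt_of_le_of_lt (le_add_right le_rfl)  hcase
    have hεε : ε + ε < 1 := lt_of_le_of_lt (le_add_right le_rfl) hεεε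
    -- fiber construction
    have hfiber : ∀ j, j ≤ n → ∃ z : E,
        P {ω | t₀ < ‖(∑ i ∈ Finset.range j, X i ω) - z‖} ≤ ε := by
      intro j hj
      have hdisj : Disjoint (Finset.Ico j n) (Finset.range j) := by
        simp only [Finset.disjoint_left, Finset.mem_Ico, Finset.mem_range]
        omega
      have hind : IndepFun (fun ω => ∑ i ∈ Finset.Ico j n, X i ω)
          (fun ω => ∑ i ∈ Finset.range j, X i ω) P := hsum_indep _ _ hdisj
      have hmap : Measure.map (fun ω => ((∑ i ∈ Finset.Ico j n, X i ω),
            (∑ i ∈ Finset.range j, X i ω))) P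
          = (Measure.map (fun ω => ∑ i ∈ Finset.Ico j n, X i ω) P).prod
              (Measure.map (fun ω => ∑ i ∈ Finset.range j, X i ω) P) :=
        (indepFun_iff_map_prod_eq_prod_map_map (hSmeas _).aemeasurable
          (hSmeas _).aemeasurable).mp hind
      set ν := Measure.map (fun ω => ∑ i ∈ Finset.Ico j n, X i ω) P with hν
      set μj := Measure.map (fun ω => ∑ i ∈ Finset.range j, X i ω) P with hμj
      have hνp : IsProbabilityMeasure ν := Measure.isProbabilityMeasure_map (hSmeas _).aemeasurable
      set A : Set (E × E) := {p | t₀ < ‖p.2 + p.1‖} with hA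
      have hAmeas : MeasurableSet A := by
        have hcont : Continuous fun p : E × E => ‖p.2 + p.1‖ :=
          (continuous_snd.add continuous_fst).norm
        exact measurableSet_lt measurable_const hcont.measurable
      have hPA : (ν.prod μj) A = ε := by
        rw [← hmap, Measure.map_apply ((hSmeas _).prodMk (hSmeas _)) hAmeas, hεdef]
        congr 1
        ext ω
        simp only [Set.mem_preimage, hA, Set.mem_setOf_eq]
        rw [Finset.sum_range_add_sum_Ico _ hj]
      have hmeasfun : Measurable fun z => μj (Prod.mk z ⁻¹' A) :=
        measurable_measure_prodMk_left hAmeas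
      have hεtop : ε ≠ ⊤ := by
        rw [hεdef]; exact measure_ne_top P _
      have hfin : ∫⁻ z, μj (Prod.mk z ⁻¹' A) ∂ν ≠ ⊤ := by
        rw [← Measure.prod_apply hAmeas, hPA]; exact hεtop
      obtain ⟨z, hz⟩ := exists_le_lintegral_aux ν hmeasfun.aemeasurable hfin
      refine ⟨-z, ?_⟩
      have hBmeas : MeasurableSet {x : E | t₀ < ‖x + z‖} :=
        measurableSet_lt measurable_const (continuous_id.add continuous_const).norm.measurable
      have hpre : {ω | t₀ < ‖(∑ i ∈ Finset.range j, X i ω) - -z‖}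
          = (fun ω => ∑ i ∈ Finset.range j, X i ω) ⁻¹' {x | t₀ < ‖x + z‖} := by
        ext ω; simp [sub_neg_eq_add]
      rw [hpre, ← Measure.map_apply (hSmeas _) hBmeas, ← hμj]
      calc μj {x | t₀ < ‖x + z‖} = μj (Prod.mk z ⁻¹' A) := rfl
        _ ≤ ∫⁻ w, μj (Prod.mk w ⁻¹' A) ∂ν := hz
        _ = ε := by rw [← Measure.prod_apply hAmeas, hPA]
    -- choose the centers c j
    have hc_ex : ∀ j, ∃ z : E, (j ≤ n →
        P {ω | t₀ < ‖(∑ i ∈ Finset.range j, X i ω) - z‖} ≤ ε) ∧ (j = 0 → z = 0) := by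
      intro j
      rcases Nat.eq_zero_or_pos j with rfl | hpos
      · refine ⟨0, fun _ => ?_, fun _ => rfl⟩
        have hempty : {ω : Ω | t₀ < ‖(∑ i ∈ Finset.range 0, X i ω) - (0:E)‖} = ∅ := by
          ext ω
          simp only [Finset.range_zero, Finset.sum_empty, sub_zero, norm_zero,
            Set.mem_setOf_eq, Set.mem_empty_iff_false, iff_false, not_lt]
          exact ht₀.le
        rw [hempty]
        simp
      · by_cases hj : j ≤ n
        · obtain ⟨z, hz⟩ := hfiber j hj
          exact ⟨z, fun _ => hz, fun h0 => absurd h0 (Nat.pos_iff_ne_zero.mp hpos)⟩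
        · exact ⟨0, fun h => absurd h hj, fun _ => rfl⟩
    choose c hc1 hc2 using hc_ex
    have hc0 : c 0 = 0 := hc2 0 rfl
    -- block concentration
    have hblock : ∀ a k, k ≤ n →
        P {ω | t₀ < ‖(∑ i ∈ Finset.Ico a (a + k), X i ω) - c k‖} ≤ ε := by
      intro a k hk
      have hA : MeasurableSet {x : E | t₀ < ‖x - c k‖} :=
        measurableSet_lt measurable_const (continuous_id.sub continuous_const).norm.measurable
      have h := hblockP a k _ hA
      have e1 : (fun ω => ∑ i ∈ Finset.Ico a (a + k), X i ω) ⁻¹' {x | t₀ < ‖x - c k‖}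
          = {ω | t₀ < ‖(∑ i ∈ Finset.Ico a (a + k), X i ω) - c k‖} := rfl
      have e2 : (fun ω => ∑ i ∈ Finset.range k, X i ω) ⁻¹' {x | t₀ < ‖x - c k‖}
          = {ω | t₀ < ‖(∑ i ∈ Finset.range k, X i ω) - c k‖} := rfl
      rw [e1, e2] at h
      rw [h]
      exact hc1 k hk
    -- quasi-additivity of the centers
    have hq : ∀ j k, j + k ≤ n → ‖c (j + k) - c j - c k‖ ≤ 3 * t₀ := by
      intro j k hjk
      have hU : P ({ω | t₀ < ‖(∑ i ∈ Finset.range j, X i ω) - c j‖}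
          ∪ {ω | t₀ < ‖(∑ i ∈ Finset.Ico j (j + k), X i ω) - c k‖}
          ∪ {ω | t₀ < ‖(∑ i ∈ Finset.range (j + k), X i ω) - c (j + k)‖}) < 1 := by
        calc P _ ≤ P ({ω | t₀ < ‖(∑ i ∈ Finset.range j, X i ω) - c j‖}
              ∪ {ω | t₀ < ‖(∑ i ∈ Finset.Ico j (j + k), X i ω) - c k‖})
            + P {ω | t₀ < ‖(∑ i ∈ Finset.range (j + k), X i ω) - c (j + k)‖} :=
              measure_union_le _ _
          _ ≤ P {ω | t₀ < ‖(∑ i ∈ Finset.range j, X i ω) - c j‖}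
              + P {ω | t₀ < ‖(∑ i ∈ Finset.Ico j (j + k), X i ω) - c k‖}
              + P {ω | t₀ < ‖(∑ i ∈ Finset.range (j + k), X i ω) - c (j + k)‖} := by
              gcongr
              exact measure_union_le _ _
          _ ≤ ε + ε + ε := by
              gcongr
              · exact hc1 j (by omega)
              · have := hblock j k (by omega)
                exact this
              · exact hc1 (j + k) hjk
          _ < 1 := hεεε
      have hne : ({ω | t₀ < ‖(∑ i ∈ Finset.range j, X i ω) - c j‖}
          ∪ {ω | t₀ < ‖(∑ i ∈ Finset.Ico j (j + k), X i ω) - c k‖}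
          ∪ {ω | t₀ < ‖(∑ i ∈ Finset.range (j + k), X i ω) - c (j + k)‖}) ≠ Set.univ := by
        intro h; rw [h, measure_univ] at hU; exact lt_irrefl _ hU
      obtain ⟨ω, hω⟩ := (Set.ne_univ_iff_exists_notMem _).mp hne
      simp only [Set.mem_union, not_or, Set.mem_setOf_eq, not_lt] at hω
      obtain ⟨⟨h1, h2⟩, h3⟩ := hω
      have hsum : (∑ i ∈ Finset.range j, X i ω) + (∑ i ∈ Finset.Ico j (j + k), X i ω)
          = ∑ i ∈ Finset.range (j + k), X i ω :=
        Finset.sum_range_add_sum_Ico _ (by omega)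
      have e : c (j + k) - c j - c k
          = ((∑ i ∈ Finset.range j, X i ω) - c j)
            + ((∑ i ∈ Finset.Ico j (j + k), X i ω) - c k)
            - ((∑ i ∈ Finset.range (j + k), X i ω) - c (j + k)) := by
        rw [← hsum]; abel
      rw [e]
      calc ‖((∑ i ∈ Finset.range j, X i ω) - c j)
            + ((∑ i ∈ Finset.Ico j (j + k), X i ω) - c k)
            - ((∑ i ∈ Finset.range (j + k), X i ω) - c (j + k))‖
          ≤ ‖((∑ i ∈ Finset.range j, X i ω) - c j)
              + ((∑ i ∈ Finset.Ico j (j + k), X i ω) - c k)‖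
            + ‖(∑ i ∈ Finset.range (j + k), X i ω) - c (j + k)‖ := norm_sub_le _ _
        _ ≤ ‖(∑ i ∈ Finset.range j, X i ω) - c j‖
            + ‖(∑ i ∈ Finset.Ico j (j + k), X i ω) - c k‖
            + ‖(∑ i ∈ Finset.range (j + k), X i ω) - c (j + k)‖ := by
            have := norm_add_le ((∑ i ∈ Finset.range j, X i ω) - c j)
              ((∑ i ∈ Finset.Ico j (j + k), X i ω) - c k)
            linarith
        _ ≤ 3 * t₀ := by linarith
    -- bound on c n
    have hcn : ‖c n‖ ≤ 2 * t₀ := by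
      have hU : P ({ω | t₀ < ‖∑ i ∈ Finset.range n, X i ω‖}
          ∪ {ω | t₀ < ‖(∑ i ∈ Finset.range n, X i ω) - c n‖}) < 1 := by
        calc P _ ≤ P {ω | t₀ < ‖∑ i ∈ Finset.range n, X i ω‖}
            + P {ω | t₀ < ‖(∑ i ∈ Finset.range n, X i ω) - c n‖} := measure_union_le _ _
          _ ≤ ε + ε := add_le_add (le_of_eq hεdef.symm) (hc1 n le_rfl)
          _ < 1 := hεε
      have hne : ({ω | t₀ < ‖∑ i ∈ Finset.range n, X i ω‖}
          ∪ {ω | t₀ < ‖(∑ i ∈ Finset.range n, X i ω) - c n‖}) ≠ Set.univ := by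
        intro h; rw [h, measure_univ] at hU; exact lt_irrefl _ hU
      obtain ⟨ω, hω⟩ := (Set.ne_univ_iff_exists_notMem _).mp hne
      simp only [Set.mem_union, not_or, Set.mem_setOf_eq, not_lt] at hω
      obtain ⟨h1, h2⟩ := hω
      have e : c n = (∑ i ∈ Finset.range n, X i ω)
          - ((∑ i ∈ Finset.range n, X i ω) - c n) := by abel
      rw [e]
      calc ‖(∑ i ∈ Finset.range n, X i ω) - ((∑ i ∈ Finset.range n, X i ω) - c n)‖
          ≤ ‖∑ i ∈ Finset.range n, X i ω‖ + ‖(∑ i ∈ Finset.range n, X i ω) - c n‖ :=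
            norm_sub_le _ _
        _ ≤ 2 * t₀ := by linarith
    -- uniform bound on all centers
    have hcb : ∀ k, k ≤ n → ‖c k‖ ≤ 14 * t₀ := by
      intro k hk
      have := quasi_norm_bound n hn c (3 * t₀) (by positivity) hc0 hq k hk
      linarith

    -- stopping time decomposition
    set A : ℕ → Set Ω := fun j => {ω | t < ‖∑ i ∈ Finset.range j, X i ω‖ ∧
        ∀ i, i < j → ‖∑ i' ∈ Finset.range i, X i' ω‖ ≤ t} with hAdef
    set G : ℕ → Set Ω := fun j =>
        {ω | ‖(∑ i ∈ Finset.Ico j n, X i ω) - c (n - j)‖ ≤ t₀} with hGdef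
    have hAmeas : ∀ j, MeasurableSet (A j) := by
      intro j
      have h1 : MeasurableSet {ω | t < ‖∑ i ∈ Finset.range j, X i ω‖} :=
        measurableSet_lt measurable_const (hSmeas _).norm
      have h2 : ∀ i : ℕ, MeasurableSet {ω | ‖∑ i' ∈ Finset.range i, X i' ω‖ ≤ t} :=
        fun i => measurableSet_le (hSmeas _).norm measurable_const
      have he : A j = {ω | t < ‖∑ i ∈ Finset.range j, X i ω‖} ∩
          ⋂ i, ⋂ (_ : i < j), {ω | ‖∑ i' ∈ Finset.range i, X i' ω‖ ≤ t} := by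
        ext ω
        simp only [hAdef, Set.mem_setOf_eq, Set.mem_inter_iff, Set.mem_iInter]
      rw [he]
      exact h1.inter (MeasurableSet.iInter fun i => MeasurableSet.iInter fun _ => h2 i)
    have hGmeas : ∀ j, MeasurableSet (G j) := by
      intro j
      exact measurableSet_le ((hSmeas _).sub measurable_const).norm measurable_const
    -- independence of A j and G j
    have hAG : ∀ j, j ≤ n → P (A j ∩ G j) = P (A j) * P (G j) := by
      intro j hjn
      have hdisj : Disjoint (Finset.range j) (Finset.Ico j n) := by
        simp only [Finset.disjoint_left, Finset.mem_Ico, Finset.mem_range]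
        omega
      have h := hindep.indepFun_finset (Finset.range j) (Finset.Ico j n) hdisj hX
      rw [indepFun_iff_measure_inter_preimage_eq_mul] at h
      set F : ℕ → ({x // x ∈ Finset.range j} → E) → E :=
        fun m v => ∑ i ∈ Finset.range m, if hmem : i ∈ Finset.range j then v ⟨i, hmem⟩ else 0
        with hFdef
      have hFmeas : ∀ m, Measurable (F m) := by
        intro m
        apply Finset.measurable_sum
        intro i _
        by_cases hi : i ∈ Finset.range j
        · simpa only [hi, dif_pos] using
            measurable_pi_apply (⟨i, hi⟩ : {x // x ∈ Finset.range j})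
        · simpa only [hi, dif_neg, not_false_iff] using
            (measurable_const : Measurable fun _ : {x // x ∈ Finset.range j} → E => (0:E))
      have hFeq : ∀ m, m ≤ j → ∀ ω,
          F m (fun i : {x // x ∈ Finset.range j} => X i ω)
            = ∑ i ∈ Finset.range m, X i ω := by
        intro m hm ω
        apply Finset.sum_congr rfl
        intro i hi
        have hmem : i ∈ Finset.range j :=
          Finset.mem_range.mpr (lt_of_lt_of_le (Finset.mem_range.mp hi) hm)
        simp only [hmem, dif_pos]
      set M1 : Set ({x // x ∈ Finset.range j} → E) :=
        {v | t < ‖F j v‖} ∩ ⋂ i, ⋂ (_ : i < j), {v | ‖F i v‖ ≤ t} with hM1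
      have hM1meas : MeasurableSet M1 := by
        refine (measurableSet_lt measurable_const (hFmeas j).norm).inter ?_
        exact MeasurableSet.iInter fun i => MeasurableSet.iInter fun _ =>
          measurableSet_le (hFmeas i).norm measurable_const
      set M2 : Set ({x // x ∈ Finset.Ico j n} → E) :=
        {w | ‖(∑ i ∈ (Finset.Ico j n).attach, w i) - c (n - j)‖ ≤ t₀} with hM2
      have hM2meas : MeasurableSet M2 := by
        refine measurableSet_le ?_ measurable_const
        exact ((Finset.measurable_sum _ (fun i _ => measurable_pi_apply i)).sub
          measurable_const).norm
      have hpre1 : A j = (fun ω (i : {x // x ∈ Finset.range j}) => X i ω) ⁻¹' M1 := by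
        ext ω
        simp only [hAdef, hM1, Set.mem_setOf_eq, Set.mem_preimage, Set.mem_inter_iff,
          Set.mem_iInter]
        constructor
        · rintro ⟨h1, h2⟩
          refine ⟨by rw [hFeq j le_rfl]; exact h1, fun i hi => ?_⟩
          rw [hFeq i (le_of_lt hi)]
          exact h2 i hi
        · rintro ⟨h1, h2⟩
          refine ⟨by rwa [hFeq j le_rfl] at h1, fun i hi => ?_⟩
          have := h2 i hi
          rwa [hFeq i (le_of_lt hi)] at this
      have hpre2 : G j = (fun ω (i : {x // x ∈ Finset.Ico j n}) => X i ω) ⁻¹' M2 := by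
        ext ω
        simp only [hGdef, hM2, Set.mem_setOf_eq, Set.mem_preimage]
        rw [Finset.sum_attach (Finset.Ico j n) (fun i => X i ω)]
      rw [hpre1, hpre2]
      exact h M1 M2 hM1meas hM2meas
    -- lower bound for P (G j)
    have hGbound : ∀ j, j ≤ n → 1 ≤ P (G j) + ε := by
      intro j hjn
      have hcompl : P ((G j)ᶜ) ≤ ε := by
        have he : (G j)ᶜ = {ω | t₀ < ‖(∑ i ∈ Finset.Ico j n, X i ω) - c (n - j)‖} := by
          ext ω
          simp only [hGdef, Set.mem_compl_iff, Set.mem_setOf_eq, not_le]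
        rw [he]
        have hb := hblock j (n - j) (by omega)
        rwa [show j + (n - j) = n by omega] at hb
      have hco := prob_compl_eq_one_sub (μ := P) (hGmeas j)
      have h1 : 1 - P (G j) ≤ ε := by rw [← hco]; exact hcompl
      have h2 : (1:ℝ≥0∞) ≤ ε + P (G j) := tsub_le_iff_right.mp h1
      rwa [add_comm] at h2
    have hε2 : ε + ε ≤ 1 := hεε.le
    have hAj_le : ∀ j, j ≤ n → P (A j) ≤ 2 * P (A j ∩ G j) := by
      intro j hjn
      rw [hAG j hjn]
      have h1 : (1:ℝ≥0∞) ≤ P (G j) + P (G j) := by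
        have ha := hGbound j hjn
        have h2 : (1:ℝ≥0∞) + 1 ≤ (P (G j) + P (G j)) + 1 := by
          calc (1:ℝ≥0∞) + 1 ≤ (P (G j) + ε) + (P (G j) + ε) := add_le_add ha ha
            _ = (P (G j) + P (G j)) + (ε + ε) := by ring
            _ ≤ (P (G j) + P (G j)) + 1 := add_le_add_right hε2 _
        exact (ENNReal.add_le_add_iff_right ENNReal.one_ne_top).mp h2
      calc P (A j) = P (A j) * 1 := (mul_one _).symm
        _ ≤ P (A j) * (P (G j) + P (G j)) := mul_le_mul_right h1 _
        _ = 2 * (P (A j) * P (G j)) := by ring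
    -- the union bound
    have hsubset : {ω | ∃ j, 1 ≤ j ∧ j ≤ n ∧ t < ‖∑ i ∈ Finset.range j, X i ω‖}
        ⊆ ⋃ j ∈ Finset.Icc 1 n, A j := by
      intro ω hω
      obtain ⟨j, hj1, hjn, hjt⟩ := hω
      have hex : ∃ m, t < ‖∑ i ∈ Finset.range m, X i ω‖ := ⟨j, hjt⟩
      have hspec : t < ‖∑ i ∈ Finset.range (Nat.find hex), X i ω‖ := Nat.find_spec hex
      have hmin : ∀ i, i < Nat.find hex → ‖∑ i' ∈ Finset.range i, X i' ω‖ ≤ t :=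
        fun i hi => not_lt.mp (Nat.find_min hex hi)
      have hj0le : Nat.find hex ≤ j := Nat.find_min' hex hjt
      have hj01 : 1 ≤ Nat.find hex := by
        rcases Nat.eq_zero_or_pos (Nat.find hex) with h0 | h
        · exfalso
          rw [h0] at hspec
          simp only [Finset.range_zero, Finset.sum_empty, norm_zero] at hspec
          linarith
        · exact h
      exact Set.mem_biUnion (Finset.mem_Icc.mpr ⟨hj01, le_trans hj0le hjn⟩) ⟨hspec, hmin⟩
    have hdisjA : ∀ a b : ℕ, a ≠ b → Disjoint (A a ∩ G a) (A b ∩ G b) := by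
      have hkey : ∀ a b, a < b → Disjoint (A a) (A b) := by
        intro a b hab
        rw [Set.disjoint_left]
        rintro ω h1 h2
        have ha1 : t < ‖∑ i ∈ Finset.range a, X i ω‖ := h1.1
        have hb2 : ‖∑ i ∈ Finset.range a, X i ω‖ ≤ t := h2.2 a hab
        linarith
      intro a b hab
      rcases lt_or_gt_of_ne hab with h | h
      · exact (hkey a b h).mono Set.inter_subset_left Set.inter_subset_left
      · exact ((hkey b a h).symm).mono Set.inter_subset_left Set.inter_subset_left
    have hsub2 : ∀ j ∈ Finset.Icc 1 n, A j ∩ G j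
        ⊆ {ω | t₀ < ‖∑ i ∈ Finset.range n, X i ω‖} := by
      intro j hj ω hω
      obtain ⟨hA1, hG1⟩ := hω
      have hj' := Finset.mem_Icc.mp hj
      have h1 : t < ‖∑ i ∈ Finset.range j, X i ω‖ := hA1.1
      have hb : ‖(∑ i ∈ Finset.Ico j n, X i ω) - c (n - j)‖ ≤ t₀ := hG1
      have hcnj : ‖c (n - j)‖ ≤ 14 * t₀ := hcb (n - j) (by omega)
      have hsum : (∑ i ∈ Finset.range j, X i ω) + (∑ i ∈ Finset.Ico j n, X i ω)
          = ∑ i ∈ Finset.range n, X i ω :=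
        Finset.sum_range_add_sum_Ico _ hj'.2
      have hBn : ‖∑ i ∈ Finset.Ico j n, X i ω‖ ≤ 15 * t₀ := by
        have h3 := norm_add_le ((∑ i ∈ Finset.Ico j n, X i ω) - c (n - j)) (c (n - j))
        rw [sub_add_cancel] at h3
        linarith
      have hlow : ‖∑ i ∈ Finset.range j, X i ω‖
          ≤ ‖∑ i ∈ Finset.range n, X i ω‖ + ‖∑ i ∈ Finset.Ico j n, X i ω‖ := by
        have h4 := norm_sub_le (∑ i ∈ Finset.range n, X i ω) (∑ i ∈ Finset.Ico j n, X i ω)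
        have e : (∑ i ∈ Finset.range n, X i ω) - (∑ i ∈ Finset.Ico j n, X i ω)
            = ∑ i ∈ Finset.range j, X i ω := by rw [← hsum]; abel
        rwa [e] at h4
      have ht16 : t = 16 * t₀ := by rw [ht₀def]; ring
      show t₀ < ‖∑ i ∈ Finset.range n, X i ω‖
      linarith
    calc P {ω | ∃ j, 1 ≤ j ∧ j ≤ n ∧ t < ‖∑ i ∈ Finset.range j, X i ω‖}
        ≤ P (⋃ j ∈ Finset.Icc 1 n, A j) := measure_mono hsubset
      _ ≤ ∑ j ∈ Finset.Icc 1 n, P (A j) := measure_biUnion_finset_le _ _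
      _ ≤ ∑ j ∈ Finset.Icc 1 n, 2 * P (A j ∩ G j) :=
          Finset.sum_le_sum (fun j hj => hAj_le j (Finset.mem_Icc.mp hj).2)
      _ = 2 * ∑ j ∈ Finset.Icc 1 n, P (A j ∩ G j) := (Finset.mul_sum _ _ _).symm
      _ = 2 * P (⋃ j ∈ Finset.Icc 1 n, (A j ∩ G j)) := by
          rw [measure_biUnion_finset
            (fun a _ b _ hab => hdisjA a b hab)
            (fun b _ => (hAmeas b).inter (hGmeas b))]
      _ ≤ 2 * P {ω | t₀ < ‖∑ i ∈ Finset.range n, X i ω‖} := by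
          gcongr
          exact Set.iUnion₂_subset hsub2
      _ = 2 * ε := by rw [← hεdef]
      _ ≤ ENNReal.ofReal 16 * ε := by
          rw [hofReal]
          exact mul_le_mul_left (by norm_num) ε
end

section
/- Let $X_1$ and $X_2$ be independent identically distributed random variables with values in a Banach space. Then for every $t > 0$, $\Pr(\|X_1\| > t) \le 5\, \Pr(\|X_1 + X_2\| > t/2)$. -/
open MeasureTheory ProbabilityTheory
open scoped ENNReal

/-- The de la Peña–Montgomery-Smith inequality: if `X₁` and `X₂` are i.i.d. Banach-space
valued random variables, then `P(‖X₁‖ > t) ≤ 5 P(‖X₁ + X₂‖ > t/2)` for all `t > 0`. -/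
theorem two_iid_comparison
    {Ω : Type*} [MeasurableSpace Ω] {P : Measure Ω} [IsProbabilityMeasure P]
    {E : Type*} [NormedAddCommGroup E] [NormedSpace ℝ E] [CompleteSpace E]
    [MeasurableSpace E] [BorelSpace E] [SecondCountableTopology E]
    (X₁ X₂ : Ω → E) (h₁ : Measurable X₁) (h₂ : Measurable X₂)
    (hindep : IndepFun X₁ X₂ P) (hident : IdentDistrib X₁ X₂ P P)
    {t : ℝ} (ht : 0 < t) :
    P {ω | t < ‖X₁ ω‖} ≤ 5 * P {ω | t / 2 < ‖X₁ ω + X₂ ω‖} := by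
  set μ := P.map X₁ with hμ
  have hprob : IsProbabilityMeasure μ := Measure.isProbabilityMeasure_map h₁.aemeasurable
  have hA : MeasurableSet {x : E | t < ‖x‖} :=
    measurableSet_lt measurable_const measurable_norm
  have hB : MeasurableSet {p : E × E | t / 2 < ‖p.1 + p.2‖} :=
    measurableSet_lt measurable_const ((measurable_fst.add measurable_snd).norm)
  have hmap : P.map (fun ω => (X₁ ω, X₂ ω)) = μ.prod μ := by
    rw [(indepFun_iff_map_prod_eq_prod_map_map h₁.aemeasurable h₂.aemeasurable).mp hindep,
        ← hident.map_eq]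
  have hP1 : P {ω | t < ‖X₁ ω‖} = μ {x : E | t < ‖x‖} := by
    rw [hμ, Measure.map_apply h₁ hA]; rfl
  have hP2 : P {ω | t / 2 < ‖X₁ ω + X₂ ω‖} = (μ.prod μ) {p : E × E | t / 2 < ‖p.1 + p.2‖} := by
    rw [← hmap, Measure.map_apply (h₁.prodMk h₂) hB]; rfl
  set ν := μ.prod (μ.prod μ) with hν
  -- the three pair projections push ν to μ.prod μ
  have hf12 : Measurable (fun p : E × E × E => (p.1, p.2.1)) :=
    measurable_fst.prodMk (measurable_fst.comp measurable_snd)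
  have hf23 : Measurable (fun p : E × E × E => p.2) := measurable_snd
  have hf13 : Measurable (fun p : E × E × E => (p.1, p.2.2)) :=
    measurable_fst.prodMk (measurable_snd.comp measurable_snd)
  have hm12 : ν.map (fun p : E × E × E => (p.1, p.2.1)) = μ.prod μ := by
    refine (Measure.prod_eq fun s u hs hu => ?_).symm
    rw [Measure.map_apply hf12 (hs.prod hu)]
    have : (fun p : E × E × E => (p.1, p.2.1)) ⁻¹' (s ×ˢ u) = s ×ˢ (u ×ˢ Set.univ) := by
      ext p; simp [Set.mem_prod]
    rw [this, hν, Measure.prod_prod, Measure.prod_prod, measure_univ, mul_one]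
  have hm23 : ν.map (fun p : E × E × E => p.2) = μ.prod μ := by
    rw [hν, Measure.map_snd_prod, measure_univ, one_smul]
  have hm13 : ν.map (fun p : E × E × E => (p.1, p.2.2)) = μ.prod μ := by
    refine (Measure.prod_eq fun s u hs hu => ?_).symm
    rw [Measure.map_apply hf13 (hs.prod hu)]
    have : (fun p : E × E × E => (p.1, p.2.2)) ⁻¹' (s ×ˢ u) = s ×ˢ (Set.univ ×ˢ u) := by
      ext p; simp [Set.mem_prod]
    rw [this, hν, Measure.prod_prod, Measure.prod_prod, measure_univ, one_mul]
  have hmfst : ν.map (fun p : E × E × E => p.1) = μ := by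
    rw [hν, Measure.map_fst_prod, measure_univ, one_smul]
  -- key set inclusion
  have hincl : {p : E × E × E | t < ‖p.1‖} ⊆
      ((fun p : E × E × E => (p.1, p.2.1)) ⁻¹' {p : E × E | t / 2 < ‖p.1 + p.2‖}) ∪
      ((fun p : E × E × E => p.2) ⁻¹' {p : E × E | t / 2 < ‖p.1 + p.2‖}) ∪
      ((fun p : E × E × E => (p.1, p.2.2)) ⁻¹' {p : E × E | t / 2 < ‖p.1 + p.2‖}) := by
    rintro ⟨x, y, z⟩ hx
    simp only [Set.mem_setOf_eq] at hx
    by_contra hc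
    simp only [Set.mem_union, Set.mem_preimage, Set.mem_setOf_eq, not_or, not_lt] at hc
    obtain ⟨⟨hxy, hyz⟩, hxz⟩ := hc
    have hxx : x + x = (x + y) + (x + z) - (y + z) := by abel
    have h2x : ‖x + x‖ ≤ ‖x + y‖ + ‖x + z‖ + ‖y + z‖ := by
      rw [hxx]
      calc ‖(x + y) + (x + z) - (y + z)‖ ≤ ‖(x + y) + (x + z)‖ + ‖y + z‖ := norm_sub_le _ _
        _ ≤ ‖x + y‖ + ‖x + z‖ + ‖y + z‖ := by
          exact add_le_add_left (norm_add_le _ _) _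
    have hnn : ‖x + x‖ = 2 * ‖x‖ := by
      rw [← two_smul ℝ x, norm_smul]; simp
    rw [hnn] at h2x
    linarith
  -- put it together
  set q := (μ.prod μ) {p : E × E | t / 2 < ‖p.1 + p.2‖} with hq
  have h1 : μ {x : E | t < ‖x‖} = ν {p : E × E × E | t < ‖p.1‖} := by
    rw [← hmfst, Measure.map_apply measurable_fst hA]; rfl
  have h12 : ν ((fun p : E × E × E => (p.1, p.2.1)) ⁻¹' {p : E × E | t / 2 < ‖p.1 + p.2‖}) = q := by
    rw [← Measure.map_apply hf12 hB, hm12]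
  have h23 : ν ((fun p : E × E × E => p.2) ⁻¹' {p : E × E | t / 2 < ‖p.1 + p.2‖}) = q := by
    rw [← Measure.map_apply hf23 hB, hm23]
  have h13 : ν ((fun p : E × E × E => (p.1, p.2.2)) ⁻¹' {p : E × E | t / 2 < ‖p.1 + p.2‖}) = q := by
    rw [← Measure.map_apply hf13 hB, hm13]
  calc P {ω | t < ‖X₁ ω‖} = ν {p : E × E × E | t < ‖p.1‖} := by rw [hP1, h1]
    _ ≤ ν (((fun p : E × E × E => (p.1, p.2.1)) ⁻¹' {p : E × E | t / 2 < ‖p.1 + p.2‖}) ∪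
        ((fun p : E × E × E => p.2) ⁻¹' {p : E × E | t / 2 < ‖p.1 + p.2‖})) +
        ν ((fun p : E × E × E => (p.1, p.2.2)) ⁻¹' {p : E × E | t / 2 < ‖p.1 + p.2‖}) :=
      le_trans (measure_mono hincl) (measure_union_le _ _)
    _ ≤ q + q + q := by
      refine add_le_add (le_trans (measure_union_le _ _) ?_) (le_of_eq h13)
      rw [h12, h23]
    _ ≤ 5 * q := by
      have : q + q + q = 3 * q := by ring
      rw [this]
      exact mul_le_mul_left (by norm_num) q
    _ = 5 * P {ω | t / 2 < ‖X₁ ω + X₂ ω‖} := by rw [hP2]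
end

section
/- Let $X_1, X_2, \dots$ be independent identically distributed random variables with values in a Banach space, with partial sums $S_j = \sum_{i=1}^j X_i$. Let $1 \le j \le k$ and $t > 0$. If $\Pr(\|S_{k-j}\| > 9t/10) \le 1/3$, then $\Pr(\|S_j\| > t) \le \frac{3}{2}\, \Pr(\|S_k\| > t/10)$. -/
open MeasureTheory ProbabilityTheory
open scoped ENNReal

/-- If `f, g` are independent and `f', g'` are independent, `f ~ f'` and `g ~ g'`,
then `f + g ~ f' + g'`. -/
lemma identDistrib_add_of_indepFun_s10 {α β γ : Type*} [MeasurableSpace α] [MeasurableSpace β]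
    [MeasurableSpace γ] [Add γ] [MeasurableAdd₂ γ]
    {μ : Measure α} {ν : Measure β} [IsFiniteMeasure μ] [IsFiniteMeasure ν]
    {f g : α → γ} {f' g' : β → γ}
    (hf : Measurable f) (hg : Measurable g) (hf' : Measurable f') (hg' : Measurable g')
    (hind : IndepFun f g μ) (hind' : IndepFun f' g' ν)
    (h1 : IdentDistrib f f' μ ν) (h2 : IdentDistrib g g' μ ν) :
    IdentDistrib (f + g) (f' + g') μ ν := by
  refine ⟨(hf.add hg).aemeasurable, (hf'.add hg').aemeasurable, ?_⟩
  have e1 : (f + g) = (fun p : γ × γ => p.1 + p.2) ∘ (fun a => (f a, g a)) := rfl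
  have e2 : (f' + g') = (fun p : γ × γ => p.1 + p.2) ∘ (fun b => (f' b, g' b)) := rfl
  rw [e1, e2, ← Measure.map_map measurable_add (hf.prodMk hg),
    ← Measure.map_map measurable_add (hf'.prodMk hg'),
    (indepFun_iff_map_prod_eq_prod_map_map hf.aemeasurable hg.aemeasurable).1 hind,
    (indepFun_iff_map_prod_eq_prod_map_map hf'.aemeasurable hg'.aemeasurable).1 hind',
    h1.map_eq, h2.map_eq]

/-- For i.i.d. random variables, a sum of `m` consecutive variables starting at `j`
has the same distribution as the sum of the first `m` variables. -/
lemma identDistrib_sum_shift {Ω : Type*} [MeasurableSpace Ω] {P : Measure Ω}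
    [IsProbabilityMeasure P]
    {E : Type*} [NormedAddCommGroup E]
    [MeasurableSpace E] [BorelSpace E] [SecondCountableTopology E]
    (X : ℕ → Ω → E) (hmeas : ∀ i, Measurable (X i))
    (hindep : iIndepFun X P)
    (hident : ∀ i, IdentDistrib (X i) (X 0) P P) (j : ℕ) :
    ∀ m : ℕ, IdentDistrib (fun ω => ∑ i ∈ Finset.range m, X (j + i) ω)
      (fun ω => ∑ i ∈ Finset.range m, X i ω) P P := by
  intro m
  induction m with
  | zero => simp only [Finset.range_zero, Finset.sum_empty]
            exact IdentDistrib.refl measurable_const.aemeasurable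
  | succ m ih =>
    have hmeasS : Measurable (fun ω => ∑ i ∈ Finset.range m, X (j + i) ω) :=
      Finset.measurable_sum _ fun i _ => hmeas _
    have hmeasS' : Measurable (fun ω => ∑ i ∈ Finset.range m, X i ω) :=
      Finset.measurable_sum _ fun i _ => hmeas _
    -- independence of shifted partial sum from next term
    have hsum_map : (fun ω => ∑ i ∈ Finset.range m, X (j + i) ω)
        = ∑ i ∈ Finset.Ico j (j + m), X i := by
      funext ω
      rw [Finset.sum_apply]
      rw [Finset.sum_Ico_eq_sum_range]
      simp
    have hind1 : IndepFun (fun ω => ∑ i ∈ Finset.range m, X (j + i) ω) (X (j + m)) P := by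
      rw [hsum_map]
      exact hindep.indepFun_finsetSum_of_notMem hmeas (by simp)
    have hind2 : IndepFun (fun ω => ∑ i ∈ Finset.range m, X i ω) (X m) P := by
      have := hindep.indepFun_finsetSum_of_notMem hmeas (s := Finset.range m) (i := m)
        (by simp)
      convert this using 1
      funext ω
      simp [Finset.sum_apply]
    have hXident : IdentDistrib (X (j + m)) (X m) P P :=
      (hident (j + m)).trans (hident m).symm
    have key : IdentDistrib ((fun ω => ∑ i ∈ Finset.range m, X (j + i) ω) + X (j + m))
        ((fun ω => ∑ i ∈ Finset.range m, X i ω) + X m) P P :=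
      identDistrib_add_of_indepFun_s10 hmeasS (hmeas _) hmeasS' (hmeas _) hind1 hind2 ih hXident
    have e1 : (fun ω => ∑ i ∈ Finset.range (m + 1), X (j + i) ω)
        = (fun ω => ∑ i ∈ Finset.range m, X (j + i) ω) + X (j + m) := by
      funext ω; simp [Finset.sum_range_succ]
    have e2 : (fun ω => ∑ i ∈ Finset.range (m + 1), X i ω)
        = (fun ω => ∑ i ∈ Finset.range m, X i ω) + X m := by
      funext ω; simp [Finset.sum_range_succ]
    rw [e1, e2]
    exact key

/-- First case in the proof of Theorem 1: for i.i.d. Banach-space valued random variables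
with partial sums `S_j`, if `1 ≤ j ≤ k`, `t > 0` and `P(‖S_{k-j}‖ > 9t/10) ≤ 1/3`, then
`P(‖S_j‖ > t) ≤ (3/2) P(‖S_k‖ > t/10)`. -/
theorem sums_iid_comparison_first_case
    {Ω : Type*} [MeasurableSpace Ω] {P : Measure Ω} [IsProbabilityMeasure P]
    {E : Type*} [NormedAddCommGroup E] [NormedSpace ℝ E] [CompleteSpace E]
    [MeasurableSpace E] [BorelSpace E] [SecondCountableTopology E]
    (X : ℕ → Ω → E) (hmeas : ∀ i, Measurable (X i))
    (hindep : iIndepFun X P)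
    (hident : ∀ i, IdentDistrib (X i) (X 0) P P)
    {j k : ℕ} (hj : 1 ≤ j) (hjk : j ≤ k) {t : ℝ} (ht : 0 < t)
    (hcase : P {ω | 9 * t / 10 < ‖∑ i ∈ Finset.range (k - j), X i ω‖} ≤ (1 : ℝ≥0∞) / 3) :
    P {ω | t < ‖∑ i ∈ Finset.range j, X i ω‖} ≤
      (3 : ℝ≥0∞) / 2 * P {ω | t / 10 < ‖∑ i ∈ Finset.range k, X i ω‖} := by
  classical
  set Sj : Ω → E := fun ω => ∑ i ∈ Finset.range j, X i ω with hSj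
  set T : Ω → E := fun ω => ∑ i ∈ Finset.Ico j k, X i ω with hT
  set Sk : Ω → E := fun ω => ∑ i ∈ Finset.range k, X i ω with hSk
  have hmSj : Measurable Sj := Finset.measurable_sum _ fun i _ => hmeas _
  have hmT : Measurable T := Finset.measurable_sum _ fun i _ => hmeas _
  have hmSk : Measurable Sk := Finset.measurable_sum _ fun i _ => hmeas _
  have hsplit : ∀ ω, Sj ω + T ω = Sk ω := fun ω => Finset.sum_range_add_sum_Ico _ hjk
  -- T has the same distribution as S_{k-j}
  have hTshift : T = fun ω => ∑ i ∈ Finset.range (k - j), X (j + i) ω := by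
    funext ω
    show ∑ i ∈ Finset.Ico j k, X i ω = _
    rw [Finset.sum_Ico_eq_sum_range]
  have hTident : IdentDistrib T (fun ω => ∑ i ∈ Finset.range (k - j), X i ω) P P := by
    rw [hTshift]
    exact identDistrib_sum_shift X hmeas hindep hident j (k - j)
  -- independence of S_j and T
  have hST : IndepFun Sj T P := by
    have h := hindep.indepFun_finset (Finset.range j) (Finset.Ico j k)
      (by simp [Finset.disjoint_left, Finset.mem_range, Finset.mem_Ico]; omega) hmeas
    have hφ : Measurable (fun v : {x // x ∈ Finset.range j} → E => ∑ i, v i) :=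
      Finset.measurable_sum _ fun i _ => measurable_pi_apply i
    have hψ : Measurable (fun v : {x // x ∈ Finset.Ico j k} → E => ∑ i, v i) :=
      Finset.measurable_sum _ fun i _ => measurable_pi_apply i
    have := h.comp hφ hψ
    convert this using 1
    · funext ω
      show ∑ i ∈ Finset.range j, X i ω = ∑ i : (Finset.range j : Finset ℕ), X i ω
      rw [← Finset.sum_attach (Finset.range j) (fun i => X i ω)]
      rfl
    · funext ω
      show ∑ i ∈ Finset.Ico j k, X i ω = ∑ i : (Finset.Ico j k : Finset ℕ), X i ω
      rw [← Finset.sum_attach (Finset.Ico j k) (fun i => X i ω)]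
      rfl
  -- the events
  have hsetA : MeasurableSet {x : E | t < ‖x‖} :=
    measurableSet_lt measurable_const measurable_norm
  have hsetB : MeasurableSet {x : E | ‖x‖ ≤ 9 * t / 10} :=
    measurableSet_le measurable_norm measurable_const
  have hsetB' : MeasurableSet {x : E | 9 * t / 10 < ‖x‖} :=
    measurableSet_lt measurable_const measurable_norm
  have hprod : P (Sj ⁻¹' {x | t < ‖x‖} ∩ T ⁻¹' {x | ‖x‖ ≤ 9 * t / 10})
      = P (Sj ⁻¹' {x | t < ‖x‖}) * P (T ⁻¹' {x | ‖x‖ ≤ 9 * t / 10}) :=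
    hST.measure_inter_preimage_eq_mul _ _ hsetA hsetB
  -- inclusion into the event for S_k
  have hincl : Sj ⁻¹' {x | t < ‖x‖} ∩ T ⁻¹' {x | ‖x‖ ≤ 9 * t / 10}
      ⊆ {ω | t / 10 < ‖Sk ω‖} := by
    rintro ω ⟨h1, h2⟩
    simp only [Set.mem_preimage, Set.mem_setOf_eq] at h1 h2 ⊢
    have := hsplit ω
    have hnorm : ‖Sj ω‖ ≤ ‖Sk ω‖ + ‖T ω‖ := by
      calc ‖Sj ω‖ = ‖Sk ω - T ω‖ := by rw [← this, add_sub_cancel_right]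
        _ ≤ ‖Sk ω‖ + ‖T ω‖ := norm_sub_le _ _
    linarith
  -- lower bound on P(B)
  have hBcompl : P (T ⁻¹' {x | 9 * t / 10 < ‖x‖}) ≤ 1 / 3 := by
    have := hTident.measure_mem_eq hsetB'
    simp only [Set.preimage] at this ⊢
    rw [this]
    exact hcase
  have hBc_eq : T ⁻¹' {x | ‖x‖ ≤ 9 * t / 10} = (T ⁻¹' {x | 9 * t / 10 < ‖x‖})ᶜ := by
    ext ω; simp [not_lt]
  have hPB : (2 : ℝ≥0∞) / 3 ≤ P (T ⁻¹' {x | ‖x‖ ≤ 9 * t / 10}) := by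
    rw [hBc_eq, prob_compl_eq_one_sub (hmT hsetB')]
    calc (2 : ℝ≥0∞) / 3 = 1 - 1 / 3 :=
          (ENNReal.sub_eq_of_eq_add (by norm_num) (by
            rw [ENNReal.div_add_div_same]
            norm_num
            rw [ENNReal.div_self] <;> norm_num)).symm
      _ ≤ 1 - P (T ⁻¹' {x | 9 * t / 10 < ‖x‖}) := tsub_le_tsub_left hBcompl 1
  -- put it together
  have hchain : P (Sj ⁻¹' {x | t < ‖x‖}) * (2 / 3)
      ≤ P {ω | t / 10 < ‖Sk ω‖} := by
    calc P (Sj ⁻¹' {x | t < ‖x‖}) * (2 / 3)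
        ≤ P (Sj ⁻¹' {x | t < ‖x‖}) * P (T ⁻¹' {x | ‖x‖ ≤ 9 * t / 10}) :=
          mul_le_mul_right hPB _
      _ = P (Sj ⁻¹' {x | t < ‖x‖} ∩ T ⁻¹' {x | ‖x‖ ≤ 9 * t / 10}) := hprod.symm
      _ ≤ P {ω | t / 10 < ‖Sk ω‖} := measure_mono hincl
  have hEq : {ω | t < ‖Sj ω‖} = Sj ⁻¹' {x | t < ‖x‖} := rfl
  calc P {ω | t < ‖Sj ω‖}
      = (3 / 2 * (2 / 3) : ℝ≥0∞) * P {ω | t < ‖Sj ω‖} := by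
        rw [← mul_div_assoc, ENNReal.div_mul_cancel (by norm_num) (by norm_num),
          ENNReal.div_self (by norm_num) (by norm_num), one_mul]
    _ = 3 / 2 * (P (Sj ⁻¹' {x | t < ‖x‖}) * (2 / 3)) := by
        rw [hEq, mul_assoc, mul_comm (P _)]
    _ ≤ 3 / 2 * P {ω | t / 10 < ‖Sk ω‖} := mul_le_mul_right hchain _
end

section
/- Let $X_1, X_2, \dots$ be independent identically distributed random variables with values in a Banach space, with partial sums $S_j = \sum_{i=1}^j X_i$. Let $k \ge 1$ and $t > 0$. If there exists $1 \le i \le k$ such that $S_i$ has no $(t/10)$-concentration point (i.e., $\Pr(\|S_i - x\| \le t/10) \le 2/3$ for every vector $x$), then $\Pr(\|S_k\| > t/10) \ge 1/3$. -/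
open MeasureTheory ProbabilityTheory
open scoped ENNReal

/-- Second case in the proof of Theorem 1: for i.i.d. Banach-space valued random variables
with partial sums `S_i`, if some `S_i` with `1 ≤ i ≤ k` has no `(t/10)`-concentration
point, then `P(‖S_k‖ > t/10) ≥ 1/3`. -/
theorem sums_iid_comparison_second_case
    {Ω : Type*} [MeasurableSpace Ω] {P : Measure Ω} [IsProbabilityMeasure P]
    {E : Type*} [NormedAddCommGroup E] [NormedSpace ℝ E] [CompleteSpace E]
    [MeasurableSpace E] [BorelSpace E] [SecondCountableTopology E]
    (X : ℕ → Ω → E) (hmeas : ∀ i, Measurable (X i))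
    (hindep : iIndepFun X P)
    (hident : ∀ i, IdentDistrib (X i) (X 0) P P)
    {k : ℕ} (hk : 1 ≤ k) {t : ℝ} (ht : 0 < t)
    (hcase : ∃ i, 1 ≤ i ∧ i ≤ k ∧ ∀ x : E,
      P {ω | ‖(∑ l ∈ Finset.range i, X l ω) - x‖ ≤ t / 10} ≤ (2 : ℝ≥0∞) / 3) :
    (1 : ℝ≥0∞) / 3 ≤ P {ω | t / 10 < ‖∑ i ∈ Finset.range k, X i ω‖} := by
  classical
  obtain ⟨i, hi1, hik, hx⟩ := hcase
  set S : Ω → E := fun ω => ∑ l ∈ Finset.range i, X l ω with hSdef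
  set T : Ω → E := fun ω => ∑ l ∈ Finset.Ico i k, X l ω with hTdef
  have hS : Measurable S := Finset.measurable_sum _ fun l _ => hmeas l
  have hT : Measurable T := Finset.measurable_sum _ fun l _ => hmeas l
  have hsum : ∀ ω, T ω + S ω = ∑ l ∈ Finset.range k, X l ω := by
    intro ω
    rw [add_comm]
    exact Finset.sum_range_add_sum_Ico _ hik
  -- independence of T and S
  have hdisj : Disjoint (Finset.Ico i k) (Finset.range i) := by
    simp only [Finset.disjoint_left, Finset.mem_Ico, Finset.mem_range]
    omega
  have hfin := hindep.indepFun_finset (Finset.Ico i k) (Finset.range i) hdisj hmeas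
  have hgmeas : ∀ (s : Finset ℕ), Measurable fun v : (j : s) → E => ∑ j, v j :=
    fun s => Finset.measurable_sum _ fun j _ => measurable_pi_apply j
  have hInd : IndepFun T S P := by
    have := hfin.comp (hgmeas (Finset.Ico i k)) (hgmeas (Finset.range i))
    convert this using 2 <;> ext ω <;>
      simp only [Function.comp, hSdef, hTdef] <;>
      exact (Finset.sum_coe_sort _ _).symm
  -- product structure
  have hmap : P.map (fun ω => (T ω, S ω)) = (P.map T).prod (P.map S) :=
    (indepFun_iff_map_prod_eq_prod_map_map hT.aemeasurable hS.aemeasurable).mp hInd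
  set A : Set (E × E) := {p : E × E | ‖p.1 + p.2‖ ≤ t / 10} with hAdef
  have hA : MeasurableSet A := by
    have : Continuous fun p : E × E => ‖p.1 + p.2‖ :=
      (continuous_fst.add continuous_snd).norm
    exact measurableSet_le this.measurable measurable_const
  have hle : P {ω | ‖T ω + S ω‖ ≤ t / 10} ≤ (2 : ℝ≥0∞) / 3 := by
    have h1 : P {ω | ‖T ω + S ω‖ ≤ t / 10} = (P.map (fun ω => (T ω, S ω))) A := by
      rw [Measure.map_apply (hT.prodMk hS) hA]
      rfl
    rw [h1, hmap, Measure.prod_apply hA]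
    have h2 : ∀ y : E, (P.map S) (Prod.mk y ⁻¹' A) ≤ (2 : ℝ≥0∞) / 3 := by
      intro y
      have hpre : Prod.mk y ⁻¹' A = {x : E | ‖x - (-y)‖ ≤ t / 10} := by
        ext x
        simp only [hAdef, Set.mem_preimage, Set.mem_setOf_eq, sub_neg_eq_add, add_comm]
      rw [hpre, Measure.map_apply hS]
      · exact hx (-y)
      · have : Continuous fun x : E => ‖x - (-y)‖ :=
          (continuous_id.sub continuous_const).norm
        exact measurableSet_le this.measurable measurable_const
    calc ∫⁻ y, (P.map S) (Prod.mk y ⁻¹' A) ∂(P.map T)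
        ≤ ∫⁻ _, (2 : ℝ≥0∞) / 3 ∂(P.map T) := lintegral_mono h2
      _ = (2 : ℝ≥0∞) / 3 := by
          have : IsProbabilityMeasure (P.map T) := Measure.isProbabilityMeasure_map hT.aemeasurable
          simp
  -- conclude
  have hmeasSk : Measurable fun ω => ∑ l ∈ Finset.range k, X l ω :=
    Finset.measurable_sum _ fun l _ => hmeas l
  have hsetle : MeasurableSet {ω | ‖∑ l ∈ Finset.range k, X l ω‖ ≤ t / 10} :=
    measurableSet_le hmeasSk.norm measurable_const
  have hcompl : {ω | t / 10 < ‖∑ l ∈ Finset.range k, X l ω‖}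
      = {ω | ‖∑ l ∈ Finset.range k, X l ω‖ ≤ t / 10}ᶜ := by
    ext ω; simp [not_le]
  have hle' : P {ω | ‖∑ l ∈ Finset.range k, X l ω‖ ≤ t / 10} ≤ (2 : ℝ≥0∞) / 3 := by
    have : {ω | ‖∑ l ∈ Finset.range k, X l ω‖ ≤ t / 10}
        = {ω | ‖T ω + S ω‖ ≤ t / 10} := by
      ext ω; rw [Set.mem_setOf_eq, Set.mem_setOf_eq, hsum ω]
    rw [this]; exact hle
  rw [hcompl, measure_compl hsetle (measure_ne_top P _), measure_univ]
  have h3 : (1 : ℝ≥0∞) = 1 / 3 + 2 / 3 := by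
    rw [ENNReal.div_add_div_same]
    norm_num
    exact (ENNReal.div_self (by norm_num) (by norm_num)).symm
  have h13 : (1 : ℝ≥0∞) - 2 / 3 = 1 / 3 :=
    ENNReal.sub_eq_of_eq_add (ENNReal.div_lt_top (by norm_num) (by norm_num)).ne h3
  calc (1 : ℝ≥0∞) / 3 = 1 - 2 / 3 := h13.symm
    _ ≤ 1 - P {ω | ‖∑ l ∈ Finset.range k, X l ω‖ ≤ t / 10} :=
        tsub_le_tsub_left hle' 1
end

section
/- Let $X_1, X_2, \dots$ be independent identically distributed random variables with values in a Banach space, with partial sums $S_i = \sum_{l=1}^i X_l$. Let $1 \le j < k$ and $t > 0$. Suppose that $\Pr(\|S_{k-j}\| > 9t/10) > 1/3$ and that for every $1 \le i \le k$ the partial sum $S_i$ has a $(t/10)$-concentration point $s_i$. Then $\|s_k\| \ge t/5$ and $\Pr(\|S_k\| \ge t/10) \ge 2/3$. -/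
open MeasureTheory ProbabilityTheory
open scoped ENNReal

section Aux

variable {Ω : Type*} [MeasurableSpace Ω] {P : Measure Ω} [IsProbabilityMeasure P]
variable {E : Type*} [NormedAddCommGroup E] [NormedSpace ℝ E]
  [MeasurableSpace E] [BorelSpace E] [SecondCountableTopology E]

lemma aux_nonempty_inter {A B : Set Ω} (hA : MeasurableSet A)
    (h : 1 < (P A).toReal + (P B).toReal) : (A ∩ B).Nonempty := by
  rw [Set.nonempty_iff_ne_empty]
  intro hemp
  have hdis : Disjoint B A := (Set.disjoint_iff_inter_eq_empty.mpr hemp).symm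
  have hU : P (B ∪ A) = P B + P A := measure_union hdis hA
  have h1 : P B + P A ≤ 1 := hU ▸ prob_le_one
  have h2 : (P B + P A).toReal ≤ 1 := by
    rw [← ENNReal.toReal_one]
    exact ENNReal.toReal_mono ENNReal.one_ne_top h1
  rw [ENNReal.toReal_add (measure_ne_top P B) (measure_ne_top P A)] at h2
  linarith

lemma aux_indep_block (X : ℕ → Ω → E) (hmeas : ∀ i, Measurable (X i))
    (hindep : iIndepFun X P)
    (S T : Finset ℕ) (hST : Disjoint S T) :
    IndepFun (fun ω => ∑ l ∈ S, X l ω) (fun ω => ∑ l ∈ T, X l ω) P := by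
  classical
  have h := hindep.indepFun_finset S T hST hmeas
  have hgS : Measurable (fun v : ↥S → E => ∑ i, v i) :=
    Finset.measurable_sum Finset.univ (fun i _ => measurable_pi_apply i)
  have hgT : Measurable (fun v : ↥T → E => ∑ i, v i) :=
    Finset.measurable_sum Finset.univ (fun i _ => measurable_pi_apply i)
  have h2 := h.comp hgS hgT
  have e1 : ((fun v : ↥S → E => ∑ i, v i) ∘ (fun a (i : S) => X i a))
      = fun a => ∑ l ∈ S, X l a := by
    funext a
    simp only [Function.comp_apply]
    exact Finset.sum_coe_sort S (fun l => X l a)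
  have e2 : ((fun v : ↥T → E => ∑ i, v i) ∘ (fun a (i : T) => X i a))
      = fun a => ∑ l ∈ T, X l a := by
    funext a
    simp only [Function.comp_apply]
    exact Finset.sum_coe_sort T (fun l => X l a)
  rwa [e1, e2] at h2

lemma aux_add_identDistrib {U V U' V' : Ω → E}
    (hU : Measurable U) (hV : Measurable V) (hU' : Measurable U') (hV' : Measurable V')
    (hUV : IndepFun U V P) (hUV' : IndepFun U' V' P)
    (h1 : IdentDistrib U U' P P) (h2 : IdentDistrib V V' P P) :
    IdentDistrib (fun ω => U ω + V ω) (fun ω => U' ω + V' ω) P P := by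
  have m1 := (indepFun_iff_map_prod_eq_prod_map_map hU.aemeasurable hV.aemeasurable).mp hUV
  have m2 := (indepFun_iff_map_prod_eq_prod_map_map hU'.aemeasurable hV'.aemeasurable).mp hUV'
  have hp : IdentDistrib (fun ω => (U ω, V ω)) (fun ω => (U' ω, V' ω)) P P :=
    ⟨(hU.prodMk hV).aemeasurable, (hU'.prodMk hV').aemeasurable,
      by rw [m1, m2, h1.map_eq, h2.map_eq]⟩
  exact hp.comp measurable_add

lemma aux_ident_block (X : ℕ → Ω → E) (hmeas : ∀ i, Measurable (X i))
    (hindep : iIndepFun X P)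
    (hident : ∀ i, IdentDistrib (X i) (X 0) P P) (a b : ℕ) :
    IdentDistrib (fun ω => ∑ l ∈ Finset.Ico a (a + b), X l ω)
      (fun ω => ∑ l ∈ Finset.range b, X l ω) P P := by
  induction b with
  | zero =>
      simp only [Nat.add_zero, Finset.Ico_self, Finset.range_zero, Finset.sum_empty]
      exact IdentDistrib.refl aemeasurable_const
  | succ b ih =>
      have e1 : (fun ω => ∑ l ∈ Finset.Ico a (a + (b + 1)), X l ω)
          = fun ω => (∑ l ∈ Finset.Ico a (a + b), X l ω) + X (a + b) ω := by
        funext ω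
        exact Finset.sum_Ico_succ_top (Nat.le_add_right a b) _
      have e2 : (fun ω => ∑ l ∈ Finset.range (b + 1), X l ω)
          = fun ω => (∑ l ∈ Finset.range b, X l ω) + X b ω := by
        funext ω
        exact Finset.sum_range_succ _ _
      rw [e1, e2]
      have hmsum : ∀ (fs : Finset ℕ), Measurable (fun ω => ∑ l ∈ fs, X l ω) :=
        fun fs => Finset.measurable_sum fs (fun i _ => hmeas i)
      have hi1 : IndepFun (fun ω => ∑ l ∈ Finset.Ico a (a + b), X l ω)
          (fun ω => ∑ l ∈ ({a + b} : Finset ℕ), X l ω) P :=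
        aux_indep_block X hmeas hindep _ _ (by simp [Finset.disjoint_singleton_right])
      have hi2 : IndepFun (fun ω => ∑ l ∈ Finset.range b, X l ω)
          (fun ω => ∑ l ∈ ({b} : Finset ℕ), X l ω) P :=
        aux_indep_block X hmeas hindep _ _ (by simp [Finset.disjoint_singleton_right])
      have es1 : (fun ω => ∑ l ∈ ({a + b} : Finset ℕ), X l ω) = X (a + b) := by
        funext ω; exact Finset.sum_singleton _ _
      have es2 : (fun ω => ∑ l ∈ ({b} : Finset ℕ), X l ω) = X b := by
        funext ω; exact Finset.sum_singleton _ _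
      rw [es1] at hi1
      rw [es2] at hi2
      exact aux_add_identDistrib (hmsum _) (hmeas _) (hmsum _) (hmeas _) hi1 hi2 ih
        ((hident (a + b)).trans (hident b).symm)

/-- Euclid-style induction: approximate additivity gives `‖b•s a − a•s b‖ ≤ (a+b−2)δ`. -/
lemma aux_euclid {E : Type*} [NormedAddCommGroup E] [NormedSpace ℝ E]
    (s : ℕ → E) (δ : ℝ) (hδ : 0 ≤ δ) (k : ℕ)
    (rel : ∀ a b : ℕ, 1 ≤ a → 1 ≤ b → a + b ≤ k → ‖s (a + b) - s a - s b‖ ≤ δ) :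
    ∀ n a b : ℕ, a + b = n → 1 ≤ b → b ≤ a → a ≤ k →
      ‖(b : ℝ) • s a - (a : ℝ) • s b‖ ≤ ((a : ℝ) + (b : ℝ) - 2) * δ := by
  intro n
  induction n using Nat.strong_induction_on with
  | _ n ih =>
    intro a b hab hb hba hak
    rcases eq_or_lt_of_le hba with heq | hlt
    · subst heq
      have h1 : (1 : ℝ) ≤ (b : ℝ) := by exact_mod_cast hb
      simp only [sub_self, norm_zero]
      have h2 : (0:ℝ) ≤ ((b:ℝ) + (b:ℝ) - 2) := by linarith
      exact mul_nonneg h2 hδ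
    · -- b < a
      have hc1 : 1 ≤ a - b := by omega
      set c := a - b with hc
      have hbc : b + c = a := by omega
      have hrel : ‖s a - s b - s c‖ ≤ δ := by
        have := rel b c hb hc1 (by omega)
        rwa [hbc] at this
      have hrec : ‖(b : ℝ) • s c - (c : ℝ) • s b‖ ≤ ((b : ℝ) + (c : ℝ) - 2) * δ := by
        rcases le_total c b with h1 | h1
        · have hih := ih (b + c) (by omega) b c rfl hc1 h1 (by omega)
          rw [norm_sub_rev]
          exact hih
        · have hih := ih (c + b) (by omega) c b rfl hb h1 (by omega)
          calc ‖(b:ℝ) • s c - (c:ℝ) • s b‖ ≤ ((c:ℝ) + (b:ℝ) - 2) * δ := hih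
            _ = ((b:ℝ) + (c:ℝ) - 2) * δ := by ring
      have hacast : (a : ℝ) = (b : ℝ) + (c : ℝ) := by exact_mod_cast hbc.symm
      have hid : (b : ℝ) • s a - (a : ℝ) • s b
          = (b : ℝ) • (s a - s b - s c) + ((b : ℝ) • s c - (c : ℝ) • s b) := by
        rw [hacast]
        module
      calc ‖(b : ℝ) • s a - (a : ℝ) • s b‖
          = ‖(b : ℝ) • (s a - s b - s c) + ((b : ℝ) • s c - (c : ℝ) • s b)‖ := by rw [hid]
        _ ≤ ‖(b : ℝ) • (s a - s b - s c)‖ + ‖(b : ℝ) • s c - (c : ℝ) • s b‖ := norm_add_le _ _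
        _ ≤ (b : ℝ) * δ + ((b : ℝ) + (c : ℝ) - 2) * δ := by
            refine add_le_add ?_ hrec
            rw [norm_smul, Real.norm_natCast]
            exact mul_le_mul_of_nonneg_left hrel (Nat.cast_nonneg b)
        _ = ((a : ℝ) + (b : ℝ) - 2) * δ := by rw [hacast]; ring

end Aux

/-- Third case in the proof of Theorem 1: for i.i.d. Banach-space valued random variables
with partial sums `S_i`, if `1 ≤ j < k`, `P(‖S_{k-j}‖ > 9t/10) > 1/3`, and every `S_i`
with `1 ≤ i ≤ k` has a `(t/10)`-concentration point `s_i`, then `‖s_k‖ ≥ t/5` and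
`P(‖S_k‖ ≥ t/10) ≥ 2/3`. -/
theorem sums_iid_comparison_third_case
    {Ω : Type*} [MeasurableSpace Ω] {P : Measure Ω} [IsProbabilityMeasure P]
    {E : Type*} [NormedAddCommGroup E] [NormedSpace ℝ E] [CompleteSpace E]
    [MeasurableSpace E] [BorelSpace E] [SecondCountableTopology E]
    (X : ℕ → Ω → E) (hmeas : ∀ i, Measurable (X i))
    (hindep : iIndepFun X P)
    (hident : ∀ i, IdentDistrib (X i) (X 0) P P)
    {j k : ℕ} (hj : 1 ≤ j) (hjk : j < k) {t : ℝ} (ht : 0 < t)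
    (hcase : (1 : ℝ≥0∞) / 3 < P {ω | 9 * t / 10 < ‖∑ l ∈ Finset.range (k - j), X l ω‖})
    (s : ℕ → E)
    (hconc : ∀ i, 1 ≤ i → i ≤ k →
      (2 : ℝ≥0∞) / 3 < P {ω | ‖(∑ l ∈ Finset.range i, X l ω) - s i‖ ≤ t / 10}) :
    t / 5 ≤ ‖s k‖ ∧
      (2 : ℝ≥0∞) / 3 ≤ P {ω | t / 10 ≤ ‖∑ l ∈ Finset.range k, X l ω‖} := by
  classical
  have hmsum : ∀ (fs : Finset ℕ), Measurable (fun ω => ∑ l ∈ fs, X l ω) :=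
    fun fs => Finset.measurable_sum fs (fun i _ => hmeas i)
  have hDconc : ∀ (c : E), MeasurableSet {x : E | ‖x - c‖ ≤ t / 10} :=
    fun c => (isClosed_le (by continuity) continuous_const).measurableSet
  have hDbig : MeasurableSet {x : E | 9 * t / 10 < ‖x‖} :=
    (isOpen_lt continuous_const continuous_norm).measurableSet
  have h23 : ((2 : ℝ≥0∞) / 3).toReal = 2 / 3 := by
    rw [ENNReal.toReal_div]; norm_num
  have h13 : ((1 : ℝ≥0∞) / 3).toReal = 1 / 3 := by
    rw [ENNReal.toReal_div]; norm_num
  have hlt23 : ∀ {A : Set Ω}, (2 : ℝ≥0∞) / 3 < P A → 2 / 3 < (P A).toReal := by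
    intro A h
    have := ENNReal.toReal_strict_mono (measure_ne_top P A) h
    rwa [h23] at this
  -- step 1: ‖s (k - j)‖ > 4t/5
  set m := k - j with hmdef
  have hm1 : 1 ≤ m := by omega
  have hmk : m ≤ k := by omega
  have hsm : 4 * t / 5 < ‖s m‖ := by
    have hA : MeasurableSet {ω | 9 * t / 10 < ‖∑ l ∈ Finset.range m, X l ω‖} :=
      hmsum (Finset.range m) hDbig
    have hPA : 1 / 3 < (P {ω | 9 * t / 10 < ‖∑ l ∈ Finset.range m, X l ω‖}).toReal := by
      have := ENNReal.toReal_strict_mono (measure_ne_top P _) hcase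
      rwa [h13] at this
    have hPB := hlt23 (hconc m hm1 hmk)
    obtain ⟨ω, hω1, hω2⟩ := aux_nonempty_inter (P := P) hA (by linarith)
    simp only [Set.mem_setOf_eq] at hω1 hω2
    have htri : ‖∑ l ∈ Finset.range m, X l ω‖
        ≤ ‖(∑ l ∈ Finset.range m, X l ω) - s m‖ + ‖s m‖ := by
      have := norm_add_le ((∑ l ∈ Finset.range m, X l ω) - s m) (s m)
      simpa using this
    linarith
  -- step 2: approximate additivity of concentration points
  have hrel : ∀ a b : ℕ, 1 ≤ a → 1 ≤ b → a + b ≤ k →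
      ‖s (a + b) - s a - s b‖ ≤ 3 * t / 10 := by
    intro a b ha hb hab
    have hT : IdentDistrib (fun ω => ∑ l ∈ Finset.Ico a (a + b), X l ω)
        (fun ω => ∑ l ∈ Finset.range b, X l ω) P P :=
      aux_ident_block X hmeas hindep hident a b
    have hPA := hlt23 (hconc (a + b) (by omega) hab)
    have hPB := hlt23 (hconc a ha (by omega))
    have hPCb := hlt23 (hconc b hb (by omega))
    have hPC : 2 / 3
        < (P {ω | ‖(∑ l ∈ Finset.Ico a (a + b), X l ω) - s b‖ ≤ t / 10}).toReal := by
      have heq : P {ω | ‖(∑ l ∈ Finset.Ico a (a + b), X l ω) - s b‖ ≤ t / 10}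
          = P {ω | ‖(∑ l ∈ Finset.range b, X l ω) - s b‖ ≤ t / 10} :=
        hT.measure_mem_eq (hDconc (s b))
      rw [heq]; exact hPCb
    have hind : IndepFun (fun ω => ∑ l ∈ Finset.range a, X l ω)
        (fun ω => ∑ l ∈ Finset.Ico a (a + b), X l ω) P := by
      rw [Finset.range_eq_Ico a]
      exact aux_indep_block X hmeas hindep _ _
        (by simp only [Finset.disjoint_left, Finset.mem_Ico]; omega)
    have hmul : P ({ω | ‖(∑ l ∈ Finset.range a, X l ω) - s a‖ ≤ t / 10}
          ∩ {ω | ‖(∑ l ∈ Finset.Ico a (a + b), X l ω) - s b‖ ≤ t / 10})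
        = P {ω | ‖(∑ l ∈ Finset.range a, X l ω) - s a‖ ≤ t / 10}
          * P {ω | ‖(∑ l ∈ Finset.Ico a (a + b), X l ω) - s b‖ ≤ t / 10} :=
      hind.measure_inter_preimage_eq_mul _ _ (hDconc (s a)) (hDconc (s b))
    have hPBC : 4 / 9 < (P ({ω | ‖(∑ l ∈ Finset.range a, X l ω) - s a‖ ≤ t / 10}
          ∩ {ω | ‖(∑ l ∈ Finset.Ico a (a + b), X l ω) - s b‖ ≤ t / 10})).toReal := by
      rw [hmul, ENNReal.toReal_mul]
      have := mul_lt_mul' hPB.le hPC (by norm_num) (lt_of_le_of_lt (by norm_num) hPB)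
      calc (4:ℝ)/9 = (2/3) * (2/3) := by norm_num
        _ < _ := this
    obtain ⟨ω, hω1, hω2, hω3⟩ :=
      aux_nonempty_inter (P := P) (hmsum (Finset.range (a + b)) (hDconc (s (a + b))))
        (show (1:ℝ) <
          (P {ω | ‖(∑ l ∈ Finset.range (a + b), X l ω) - s (a + b)‖ ≤ t / 10}).toReal
          + (P ({ω | ‖(∑ l ∈ Finset.range a, X l ω) - s a‖ ≤ t / 10}
            ∩ {ω | ‖(∑ l ∈ Finset.Ico a (a + b), X l ω) - s b‖ ≤ t / 10})).toReal
          by linarith)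
    simp only [Set.mem_setOf_eq] at hω1 hω2 hω3
    have hsplit : (∑ l ∈ Finset.range (a + b), X l ω)
        = (∑ l ∈ Finset.range a, X l ω) + ∑ l ∈ Finset.Ico a (a + b), X l ω := by
      rw [Finset.range_eq_Ico, Finset.range_eq_Ico]
      exact (Finset.sum_Ico_consecutive _ (Nat.zero_le a) (Nat.le_add_right a b)).symm
    have hidd : s (a + b) - s a - s b
        = (s (a + b) - (∑ l ∈ Finset.range (a + b), X l ω))
          + (((∑ l ∈ Finset.range a, X l ω) - s a)
            + ((∑ l ∈ Finset.Ico a (a + b), X l ω) - s b)) := by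
      rw [hsplit]; abel
    have hb1 : ‖s (a + b) - (∑ l ∈ Finset.range (a + b), X l ω)‖ ≤ t / 10 := by
      rw [norm_sub_rev]; exact hω1
    calc ‖s (a + b) - s a - s b‖
        ≤ ‖s (a + b) - (∑ l ∈ Finset.range (a + b), X l ω)‖
          + (‖(∑ l ∈ Finset.range a, X l ω) - s a‖
            + ‖(∑ l ∈ Finset.Ico a (a + b), X l ω) - s b‖) := by
          rw [hidd]
          exact (norm_add_le _ _).trans (by gcongr; exact norm_add_le _ _)
      _ ≤ 3 * t / 10 := by linarith
  -- step 3: conclude ‖s k‖ ≥ t/5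
  have hsk : t / 5 ≤ ‖s k‖ := by
    by_contra hcon
    push_neg at hcon
    have hkey := aux_euclid s (3 * t / 10) (by linarith) k hrel (k + m) k m rfl hm1 hmk le_rfl
    have htri : ‖(k : ℝ) • s m‖ ≤ ‖(m : ℝ) • s k‖ + ‖(m : ℝ) • s k - (k : ℝ) • s m‖ := by
      have := norm_add_le ((m : ℝ) • s k) (((k : ℝ) • s m) - (m : ℝ) • s k)
      rw [norm_sub_rev] at this
      simpa using this
    rw [norm_smul, norm_smul, Real.norm_natCast, Real.norm_natCast] at htri
    have hmlek : (m : ℝ) ≤ (k : ℝ) := by exact_mod_cast hmk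
    have hk1 : (1 : ℝ) ≤ (k : ℝ) := by
      have : 1 ≤ k := by omega
      exact_mod_cast this
    have hsknn : 0 ≤ ‖s k‖ := norm_nonneg _
    have hkm : (k : ℝ) * ‖s m‖ ≤ (m : ℝ) * ‖s k‖ + ((k : ℝ) + (m : ℝ) - 2) * (3 * t / 10) :=
      by linarith [hkey]
    have e1 : (k : ℝ) * (4 * t / 5) ≤ (k : ℝ) * ‖s m‖ :=
      mul_le_mul_of_nonneg_left hsm.le (by linarith)
    have e2 : (m : ℝ) * ‖s k‖ ≤ (m : ℝ) * (t / 5) :=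
      mul_le_mul_of_nonneg_left hcon.le (by positivity)
    have hmt : (m : ℝ) * t ≤ (k : ℝ) * t := mul_le_mul_of_nonneg_right hmlek ht.le
    linarith [hkm, e1, e2, ht, hmt]
  refine ⟨hsk, ?_⟩
  -- step 4: tail bound for S_k
  have hsub : {ω | ‖(∑ l ∈ Finset.range k, X l ω) - s k‖ ≤ t / 10}
      ⊆ {ω | t / 10 ≤ ‖∑ l ∈ Finset.range k, X l ω‖} := by
    intro ω hω
    simp only [Set.mem_setOf_eq] at hω ⊢
    have htri : ‖s k‖ ≤ ‖∑ l ∈ Finset.range k, X l ω‖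
        + ‖(∑ l ∈ Finset.range k, X l ω) - s k‖ := by
      have := norm_add_le (∑ l ∈ Finset.range k, X l ω)
        (s k - (∑ l ∈ Finset.range k, X l ω))
      rw [norm_sub_rev] at this
      simpa using this
    linarith
  exact le_trans (hconc k (by omega) le_rfl).le (measure_mono hsub)
end

section
/- There is no universal constant for the weighted analogue of Theorem 1: for every constant $c > 0$ there exist real-valued independent identically distributed random variables $X_1, X_2, \dots$, positive weights $\alpha_1, \alpha_2, \dots > 0$, integers $1 \le j \le k$, and $t > 0$ such that, with $S_k = \sum_{i=1}^k \alpha_i X_i$, one has $\Pr(|S_j| > t) > c\, \Pr(|S_k| > t/c)$. -/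
open MeasureTheory ProbabilityTheory
open scoped ENNReal

namespace NWC

variable (n : ℕ) [NeZero n]

local instance : IsTopologicalAddGroup (ZMod n) :=
  { continuous_add := continuous_of_discreteTopology
    continuous_neg := continuous_of_discreteTopology }

abbrev Om : Type := ℕ → ZMod n

noncomputable def P : Measure (Om n) :=
  Measure.addHaarMeasure (⊤ : TopologicalSpace.PositiveCompacts (Om n))

instance : IsProbabilityMeasure (P n) := by
  constructor
  have : ((⊤ : TopologicalSpace.PositiveCompacts (Om n)) : Set (Om n)) = Set.univ := rfl
  rw [← this]
  exact Measure.addHaarMeasure_self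

instance : (P n).IsAddLeftInvariant :=
  Measure.isAddLeftInvariant_addHaarMeasure _

/-- cylinder -/
def cyl (s : Finset ℕ) (b : ℕ → ZMod n) : Set (Om n) := {ω | ∀ i ∈ s, ω i = b i}

omit [NeZero n] in
lemma measurableSet_cyl (s : Finset ℕ) (b : ℕ → ZMod n) : MeasurableSet (cyl n s b) := by
  have : cyl n s b = ⋂ i ∈ s, (fun ω : Om n => ω i) ⁻¹' {b i} := by
    ext ω; simp [cyl]
  rw [this]
  exact MeasurableSet.biInter s.countable_toSet
    (fun i _ => measurable_pi_apply i (MeasurableSet.of_discrete))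

lemma meas_cyl (s : Finset ℕ) (b : ℕ → ZMod n) :
    P n (cyl n s b) = ((n : ℝ≥0∞)⁻¹) ^ s.card := by
  classical
  induction s using Finset.induction_on generalizing b with
  | empty =>
      have : cyl n ∅ b = Set.univ := by
        ext ω; simp [cyl]
      simp [this]
  | @insert a s ha ih =>
      have key : ∀ v : ZMod n,
          P n (cyl n (insert a s) (Function.update b a v)) = P n (cyl n (insert a s) b) := by
        intro v
        rw [← measure_preimage_add (P n) (Pi.single a (b a - v)) (cyl n (insert a s) b)]
        congr 1
        ext ω
        simp only [cyl, Set.mem_preimage, Set.mem_setOf_eq, Pi.add_apply]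
        refine forall₂_congr (fun i hi => ?_)
        rcases eq_or_ne i a with rfl | hia
        · simp only [Pi.single_eq_same, Function.update_self]
          constructor
          · intro h; rw [h]; abel
          · intro h
            have h2 : b i - v + ω i = b i - v + v := by rw [h]; abel
            exact add_left_cancel h2
        · simp [Pi.single_eq_of_ne hia, Function.update_of_ne hia]
      have partition : cyl n s b = ⋃ v : ZMod n, cyl n (insert a s) (Function.update b a v) := by
        ext ω
        simp only [Set.mem_iUnion, cyl, Set.mem_setOf_eq]
        constructor
        · intro h
          refine ⟨ω a, fun i hi => ?_⟩
          rcases Finset.mem_insert.1 hi with rfl | his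
          · simp
          · rw [Function.update_of_ne (by rintro rfl; exact ha his)]
            exact h i his
        · rintro ⟨v, h⟩ i his
          have := h i (Finset.mem_insert_of_mem his)
          rwa [Function.update_of_ne (by rintro rfl; exact ha his)] at this
      have disj : Pairwise (Function.onFun Disjoint
          fun v => cyl n (insert a s) (Function.update b a v)) := by
        intro v w hvw
        rw [Function.onFun, Set.disjoint_left]
        intro ω h1 h2
        have e1 := h1 a (Finset.mem_insert_self a s)
        have e2 := h2 a (Finset.mem_insert_self a s)
        rw [Function.update_self] at e1 e2
        exact hvw (e1 ▸ e2)
      have hsum : P n (cyl n s b) = ∑' v : ZMod n, P n (cyl n (insert a s) (Function.update b a v)) := by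
        rw [partition]
        exact measure_iUnion disj (fun v => measurableSet_cyl n _ _)
      rw [ih] at hsum
      simp only [key] at hsum
      rw [tsum_fintype, Finset.sum_const, Finset.card_univ, ZMod.card, nsmul_eq_mul] at hsum
      have hn0 : (n : ℝ≥0∞) ≠ 0 := by
        simpa using (NeZero.ne n)
      have hnt : (n : ℝ≥0∞) ≠ ⊤ := ENNReal.natCast_ne_top n
      have : P n (cyl n (insert a s) b) = (n : ℝ≥0∞)⁻¹ * ((n : ℝ≥0∞) * P n (cyl n (insert a s) b)) := by
        rw [← mul_assoc, ENNReal.inv_mul_cancel hn0 hnt, one_mul]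
      rw [this, ← hsum, Finset.card_insert_of_notMem ha, pow_succ, mul_comm]


/-- coordinate event -/
def coordSet (i : ℕ) (F : Finset (ZMod n)) : Set (Om n) := {ω | ω i ∈ F}

omit [NeZero n] in
lemma measurableSet_coordSet (i : ℕ) (F : Finset (ZMod n)) :
    MeasurableSet (coordSet n i F) :=
  measurable_pi_apply i (MeasurableSet.of_discrete)

lemma master (u : Finset ℕ) :
    ∀ (s : Finset ℕ) (b : ℕ → ZMod n) (E : ℕ → Finset (ZMod n)), Disjoint s u →
    P n (cyl n s b ∩ ⋂ i ∈ u, coordSet n i (E i))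
      = (n : ℝ≥0∞)⁻¹ ^ s.card * ∏ i ∈ u, ((E i).card * (n : ℝ≥0∞)⁻¹) := by
  classical
  induction u using Finset.induction_on with
  | empty =>
      intro s b E _
      simp [meas_cyl]
  | @insert a u hau ih =>
      intro s b E hdisj
      have has : a ∉ s := fun h => (Finset.disjoint_left.1 hdisj h (Finset.mem_insert_self a u))
      have hdisj' : Disjoint (insert a s) u := by
        rw [Finset.disjoint_left]
        intro x hx hxu
        rcases Finset.mem_insert.1 hx with rfl | hxs
        · exact hau hxu
        · exact Finset.disjoint_left.1 hdisj hxs (Finset.mem_insert_of_mem hxu)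
      have decomp : cyl n s b ∩ ⋂ i ∈ insert a u, coordSet n i (E i)
          = ⋃ v ∈ E a, (cyl n (insert a s) (Function.update b a v) ∩ ⋂ i ∈ u, coordSet n i (E i)) := by
        ext ω
        simp only [Set.mem_inter_iff, Set.mem_iInter, Set.mem_iUnion, cyl, coordSet,
          Set.mem_setOf_eq, Finset.mem_insert]
        constructor
        · rintro ⟨hcyl, hco⟩
          refine ⟨ω a, (hco a (Or.inl rfl)), ⟨?_, fun i hi => hco i (Or.inr hi)⟩⟩
          intro i hi
          rcases hi with rfl | his
          · simp
          · rw [Function.update_of_ne (by rintro rfl; exact has his)]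
            exact hcyl i his
        · rintro ⟨v, hv, hcyl, hco⟩
          have hva : ω a = v := by
            have := hcyl a (Or.inl rfl)
            rwa [Function.update_self] at this
          refine ⟨fun i his => ?_, fun i hi => ?_⟩
          · have := hcyl i (Or.inr his)
            rwa [Function.update_of_ne (by rintro rfl; exact has his)] at this
          · rcases hi with rfl | hiu
            · rw [hva]; exact hv
            · exact hco i hiu
      have hmeas : ∀ v : ZMod n, MeasurableSet
          (cyl n (insert a s) (Function.update b a v) ∩ ⋂ i ∈ u, coordSet n i (E i)) := by
        intro v
        exact (measurableSet_cyl n _ _).inter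
          (MeasurableSet.biInter u.countable_toSet fun i _ => measurableSet_coordSet n i (E i))
      have hdisjsets : Set.PairwiseDisjoint (E a : Set (ZMod n))
          (fun v => cyl n (insert a s) (Function.update b a v) ∩ ⋂ i ∈ u, coordSet n i (E i)) := by
        intro v _ w _ hvw
        rw [Function.onFun, Set.disjoint_left]
        rintro ω ⟨h1, -⟩ ⟨h2, -⟩
        have e1 := h1 a (Finset.mem_insert_self a s)
        have e2 := h2 a (Finset.mem_insert_self a s)
        rw [Function.update_self] at e1 e2
        exact hvw (e1 ▸ e2)
      rw [decomp, measure_biUnion_finset hdisjsets fun v _ => hmeas v]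
      have : ∀ v ∈ E a, P n (cyl n (insert a s) (Function.update b a v) ∩ ⋂ i ∈ u, coordSet n i (E i))
          = (n : ℝ≥0∞)⁻¹ ^ (s.card + 1) * ∏ i ∈ u, ((E i).card * (n : ℝ≥0∞)⁻¹) := by
        intro v _
        rw [ih (insert a s) (Function.update b a v) E hdisj',
          Finset.card_insert_of_notMem has]
      rw [Finset.sum_congr rfl this, Finset.sum_const, Finset.prod_insert hau, nsmul_eq_mul,
        pow_succ]
      ring

lemma meas_coordSet (i : ℕ) (F : Finset (ZMod n)) :
    P n (coordSet n i F) = (F.card : ℝ≥0∞) * (n : ℝ≥0∞)⁻¹ := by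
  have h := master n {i} ∅ 0 (fun _ => F) (by simp)
  have hU : cyl n ∅ 0 = Set.univ := by ext ω; simp [cyl]
  rw [hU, Set.univ_inter] at h
  simpa using h

lemma preimage_eq_coordSet (i : ℕ) (A : Set (ZMod n)) :
    (fun ω : Om n => ω i) ⁻¹' A = coordSet n i (Set.toFinite A).toFinset := by
  ext ω; simp [coordSet, Set.Finite.mem_toFinset]

lemma iIndep_eval :
    iIndepFun
      (fun i (ω : Om n) => ω i) (P n) := by
  rw [iIndepFun_iff_measure_inter_preimage_eq_mul]
  intro S sets _
  simp only [preimage_eq_coordSet]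
  have h := master n S ∅ 0 (fun i => (Set.toFinite (sets i)).toFinset) (by simp)
  have hU : cyl n ∅ 0 = Set.univ := by ext ω; simp [cyl]
  rw [hU, Set.univ_inter] at h
  simp only [Finset.card_empty, pow_zero, one_mul] at h
  rw [h]
  exact Finset.prod_congr rfl (fun i _ => (meas_coordSet n i _).symm)

lemma map_eval (i : ℕ) :
    (P n).map (fun ω : Om n => ω i) = (P n).map (fun ω : Om n => ω 0) := by
  apply Measure.ext
  intro A hA
  rw [Measure.map_apply (measurable_pi_apply i) hA,
    Measure.map_apply (measurable_pi_apply 0) hA,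
    preimage_eq_coordSet, preimage_eq_coordSet, meas_coordSet, meas_coordSet]

/-! ### The random variables -/

noncomputable def fv : ZMod n → ℝ := fun v => if v = 0 then 4*n - 2 else -2

noncomputable def X : ℕ → Om n → ℝ := fun i ω => fv n (ω i)

noncomputable def chi : ℕ → Om n → ℝ := fun i ω => if ω i = 0 then 1 else 0

noncomputable def αw : ℕ → ℝ := fun i => if i = 0 then 1 else ((n:ℝ)^2)⁻¹

def s₀ : Finset ℕ := (Finset.range (n^2+1)).erase 0

omit [NeZero n] in
lemma card_s₀ : (s₀ n).card = n^2 := by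
  rw [s₀, Finset.card_erase_of_mem (Finset.mem_range.2 (Nat.succ_pos _)), Finset.card_range]
  simp

omit [NeZero n] in
lemma measurable_X (i : ℕ) : Measurable (X n i) :=
  Measurable.comp (measurable_from_top) (measurable_pi_apply i)

omit [NeZero n] in
lemma measurable_chi (i : ℕ) : Measurable (chi n i) := by
  have : chi n i = (fun v : ZMod n => if v = 0 then (1:ℝ) else 0) ∘ (fun ω : Om n => ω i) := rfl
  rw [this]
  exact Measurable.comp (measurable_from_top) (measurable_pi_apply i)

lemma indep_X : iIndepFun (X n) (P n) :=
  (iIndep_eval n).comp (fun _ => fv n) (fun _ => measurable_from_top)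

lemma indep_chi : iIndepFun (chi n) (P n) :=
  (iIndep_eval n).comp (fun _ => fun v : ZMod n => if v = 0 then (1:ℝ) else 0)
    (fun _ => measurable_from_top)

lemma ident_X (i : ℕ) : IdentDistrib (X n i) (X n 0) (P n) (P n) := by
  refine ⟨(measurable_X n i).aemeasurable, (measurable_X n 0).aemeasurable, ?_⟩
  show (P n).map (X n i) = (P n).map (X n 0)
  have h1 : X n i = (fv n) ∘ (fun ω : Om n => ω i) := rfl
  have h2 : X n 0 = (fv n) ∘ (fun ω : Om n => ω 0) := rfl
  rw [h1, h2, ← Measure.map_map measurable_from_top (measurable_pi_apply i),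
    ← Measure.map_map measurable_from_top (measurable_pi_apply 0), map_eval]

lemma memLp_chi (i : ℕ) : MemLp (chi n i) 2 (P n) := by
  refine MemLp.of_bound (measurable_chi n i).aestronglyMeasurable 1 ?_
  filter_upwards with ω
  by_cases h : ω i = 0 <;> simp [chi, h]

lemma integral_chi (i : ℕ) : ∫ ω, chi n i ω ∂(P n) = (n:ℝ)⁻¹ := by
  classical
  have hind : chi n i = Set.indicator (coordSet n i {0}) (fun _ => (1:ℝ)) := by
    ext ω
    rw [Set.indicator_apply]
    by_cases h : ω i = 0
    · simp [chi, coordSet, h]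
    · simp [chi, coordSet, h]
  rw [hind, integral_indicator_const (1:ℝ) (measurableSet_coordSet n i {0}), measureReal_def, meas_coordSet]
  simp [ENNReal.toReal_inv]

lemma variance_chi (i : ℕ) : variance (chi n i) (P n) = (n:ℝ)⁻¹ - ((n:ℝ)⁻¹)^2 := by
  rw [variance_eq_sub (memLp_chi n i)]
  have hsq : (chi n i)^2 = chi n i := by
    ext ω; by_cases h : ω i = 0 <;> simp [chi, h]
  rw [hsq]
  rw [show (P n)[chi n i] = (n:ℝ)⁻¹ from integral_chi n i]

lemma EB : ∫ ω, (∑ i ∈ s₀ n, chi n i) ω ∂(P n) = (n:ℝ) := by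
  have hn : (n:ℝ) ≠ 0 := Nat.cast_ne_zero.2 (NeZero.ne n)
  simp only [Finset.sum_apply]
  rw [integral_finset_sum _ (fun i _ => (memLp_chi n i).integrable one_le_two),
    Finset.sum_congr rfl (fun i _ => integral_chi n i), Finset.sum_const, card_s₀,
    nsmul_eq_mul]
  push_cast
  field_simp

lemma varB : variance (∑ i ∈ s₀ n, chi n i) (P n) ≤ (n:ℝ) := by
  have hn : (0:ℝ) < n := Nat.cast_pos.2 (Nat.pos_of_ne_zero (NeZero.ne n))
  rw [IndepFun.variance_sum (fun i _ => memLp_chi n i)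
    (fun i _ j _ hij => (indep_chi n).indepFun hij)]
  rw [Finset.sum_congr rfl (fun i _ => variance_chi n i), Finset.sum_const, card_s₀,
    nsmul_eq_mul]
  push_cast
  rw [mul_sub]
  have h1 : (n:ℝ)^2 * ((n:ℝ)⁻¹) = n := by field_simp
  have h2 : (0:ℝ) ≤ (n:ℝ)^2 * ((n:ℝ)⁻¹)^2 := by positivity
  linarith

lemma q_tail (lam : ℝ) (hlam : 0 < lam) :
    P n {ω | lam ≤ |(∑ i ∈ s₀ n, chi n i) ω - (n:ℝ)|} ≤ ENNReal.ofReal ((n:ℝ) / lam^2) := by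
  have hmem : MemLp (∑ i ∈ s₀ n, chi n i) 2 (P n) :=
    memLp_finset_sum' _ (fun i _ => memLp_chi n i)
  have h := meas_ge_le_variance_div_sq (μ := P n) hmem hlam
  rw [show (P n)[∑ i ∈ s₀ n, chi n i] = (n:ℝ) from EB n] at h
  refine h.trans (ENNReal.ofReal_le_ofReal ?_)
  gcongr
  exact varB n

lemma Sk_eq (ω : Om n) (h0 : ω 0 ≠ 0) :
    ∑ i ∈ Finset.range (n^2+1), αw n i * X n i ω
      = (4 / (n:ℝ)) * ((∑ i ∈ s₀ n, chi n i) ω - (n:ℝ)) := by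
  have hn : (n:ℝ) ≠ 0 := Nat.cast_ne_zero.2 (NeZero.ne n)
  rw [← Finset.add_sum_erase (Finset.range (n^2+1)) (fun i => αw n i * X n i ω)
      (Finset.mem_range.2 (Nat.succ_pos _))]
  have h00 : αw n 0 * X n 0 ω = -2 := by simp [αw, X, fv, h0]
  have hterm : ∀ i ∈ s₀ n, αw n i * X n i ω
      = ((n:ℝ)^2)⁻¹ * ((4*n) * chi n i ω - 2) := by
    intro i hi
    have hi0 : i ≠ 0 := (Finset.mem_erase.1 hi).1
    by_cases h : ω i = 0
    · simp [αw, X, fv, chi, h, hi0]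
    · simp [αw, X, fv, chi, h, hi0]
  have hs₀ : (Finset.range (n^2+1)).erase 0 = s₀ n := rfl
  rw [hs₀, h00, Finset.sum_congr rfl hterm, ← Finset.mul_sum, Finset.sum_sub_distrib,
    ← Finset.mul_sum, Finset.sum_const, card_s₀, nsmul_eq_mul, Finset.sum_apply]
  push_cast
  field_simp
  ring

lemma jev : {ω : Om n | 1 < |∑ i ∈ Finset.range 1, αw n i * X n i ω|} = Set.univ := by
  have hn1 : (1:ℝ) ≤ n := Nat.one_le_cast.2 (Nat.pos_of_ne_zero (NeZero.ne n))
  ext ω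
  simp only [Finset.range_one, Finset.sum_singleton, Set.mem_setOf_eq, Set.mem_univ, iff_true]
  by_cases h : ω 0 = 0
  · have he : αw n 0 * X n 0 ω = 4*n - 2 := by simp [αw, X, fv, h]
    rw [he, abs_of_nonneg (by linarith)]
    linarith
  · have he : αw n 0 * X n 0 ω = -2 := by simp [αw, X, fv, h]
    rw [he]
    rw [abs_of_nonpos (by norm_num)]
    norm_num

lemma incl (c' τ : ℝ) (hc' : 1 ≤ c') (hτ : 1/c' ≤ τ) :
    {ω : Om n | τ < |∑ i ∈ Finset.range (n^2+1), αw n i * X n i ω|}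
      ⊆ coordSet n 0 {0}
        ∪ {ω : Om n | (n:ℝ)/(4*c') ≤ |(∑ i ∈ s₀ n, chi n i) ω - (n:ℝ)|} := by
  intro ω hω
  by_cases h0 : ω 0 = 0
  · exact Or.inl (by simp [coordSet, h0])
  · right
    simp only [Set.mem_setOf_eq] at hω ⊢
    by_contra hcon
    push_neg at hcon
    have hnpos : (0:ℝ) < n := Nat.cast_pos.2 (Nat.pos_of_ne_zero (NeZero.ne n))
    have hc'pos : (0:ℝ) < c' := lt_of_lt_of_le one_pos hc'
    have habs : |∑ i ∈ Finset.range (n^2+1), αw n i * X n i ω|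
        = (4/(n:ℝ)) * |(∑ i ∈ s₀ n, chi n i) ω - (n:ℝ)| := by
      rw [Sk_eq n ω h0, abs_mul, abs_of_nonneg (by positivity : (0:ℝ) ≤ 4/(n:ℝ))]
    rw [habs] at hω
    have hlt : (4/(n:ℝ)) * |(∑ i ∈ s₀ n, chi n i) ω - (n:ℝ)|
        < (4/(n:ℝ)) * ((n:ℝ)/(4*c')) := by
      apply mul_lt_mul_of_pos_left hcon (by positivity)
    have heq : (4/(n:ℝ)) * ((n:ℝ)/(4*c')) = 1/c' := by field_simp
    rw [heq] at hlt
    linarith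

theorem main (c : ℝ) (hc : 0 < c) :
    ∃ (Ω : Type) (_ : MeasurableSpace Ω) (P : Measure Ω)
      (_ : IsProbabilityMeasure P) (X : ℕ → Ω → ℝ) (α : ℕ → ℝ) (j k : ℕ) (t : ℝ),
      (∀ i, Measurable (X i)) ∧
      iIndepFun X P ∧
      (∀ i, IdentDistrib (X i) (X 0) P P) ∧
      (∀ i, 0 < α i) ∧
      1 ≤ j ∧ j ≤ k ∧ 0 < t ∧
      ENNReal.ofReal c * P {ω | t / c < |∑ i ∈ Finset.range k, α i * X i ω|} <
        P {ω | t < |∑ i ∈ Finset.range j, α i * X i ω|} := by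
  classical
  set c' : ℝ := max c 1 with hc'def
  have hc'1 : 1 ≤ c' := le_max_right _ _
  have hcc' : c ≤ c' := le_max_left _ _
  have hc'pos : (0:ℝ) < c' := lt_of_lt_of_le one_pos hc'1
  set n : ℕ := ⌈17 * c'^3⌉₊ + 1 with hndef
  haveI : NeZero n := ⟨Nat.succ_ne_zero _⟩
  have hnpos : (0:ℝ) < n := by
    rw [hndef]; push_cast; positivity
  have hn17 : 17 * c'^3 < (n:ℝ) := by
    have h1 : 17*c'^3 ≤ (⌈17*c'^3⌉₊ : ℝ) := Nat.le_ceil _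
    have h2 : ((⌈17*c'^3⌉₊ : ℕ) : ℝ) + 1 = (n:ℝ) := by rw [hndef]; push_cast; ring
    linarith
  have hnne : (n:ℝ) ≠ 0 := ne_of_gt hnpos
  refine ⟨Om n, inferInstance, P n, inferInstance, X n, αw n, 1, n^2+1, 1,
    measurable_X n, indep_X n, ident_X n, ?_, le_refl 1, by omega, one_pos, ?_⟩
  · intro i
    by_cases h : i = 0 <;> simp [αw, h] <;> positivity
  · set lam : ℝ := (n:ℝ)/(4*c') with hlamdef
    have hlam : 0 < lam := by positivity
    have hq : P n {ω | 1/c < |∑ i ∈ Finset.range (n^2+1), αw n i * X n i ω|}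
        ≤ (n:ℝ≥0∞)⁻¹ + ENNReal.ofReal ((n:ℝ)/lam^2) := by
      refine le_trans (measure_mono (incl n c' (1/c) hc'1
        (one_div_le_one_div_of_le hc hcc'))) ?_
      refine le_trans (measure_union_le _ _) ?_
      have h1 : P n (coordSet n 0 {0}) = (n:ℝ≥0∞)⁻¹ := by
        rw [meas_coordSet]; simp
      rw [h1]
      exact add_le_add_right (q_tail n lam hlam) _
    have hsum : (n:ℝ≥0∞)⁻¹ + ENNReal.ofReal ((n:ℝ)/lam^2)
        = ENNReal.ofReal ((n:ℝ)⁻¹ + (n:ℝ)/lam^2) := by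
      rw [ENNReal.ofReal_add (by positivity) (by positivity),
        ENNReal.ofReal_inv_of_pos hnpos, ENNReal.ofReal_natCast]
    have hreal : c' * ((n:ℝ)⁻¹ + (n:ℝ)/lam^2) < 1 := by
      have hl : (n:ℝ)⁻¹ + (n:ℝ)/lam^2 = (1 + 16*c'^2)/n := by
        rw [hlamdef]; field_simp; ring
      rw [hl, ← mul_div_assoc, div_lt_one hnpos]
      nlinarith [hn17, hc'1, sq_nonneg c', sq_nonneg (c' - 1), hc'pos]
    calc ENNReal.ofReal c * P n {ω | 1/c < |∑ i ∈ Finset.range (n^2+1), αw n i * X n i ω|}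
        ≤ ENNReal.ofReal c' * ENNReal.ofReal ((n:ℝ)⁻¹ + (n:ℝ)/lam^2) := by
          exact mul_le_mul' (ENNReal.ofReal_le_ofReal hcc') (le_of_le_of_eq hq hsum)
      _ = ENNReal.ofReal (c' * ((n:ℝ)⁻¹ + (n:ℝ)/lam^2)) := (ENNReal.ofReal_mul hc'pos.le).symm
      _ < 1 := ENNReal.ofReal_lt_one.2 hreal
      _ = P n Set.univ := (measure_univ).symm
      _ = P n {ω | 1 < |∑ i ∈ Finset.range 1, αw n i * X n i ω|} := by rw [jev n]

end NWC

open MeasureTheory ProbabilityTheory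
open scoped ENNReal

/-- No universal constant works for the weighted analogue of Theorem 1: for every `c > 0`
there exist real-valued i.i.d. random variables `X_i`, positive weights `α_i`, indices
`1 ≤ j ≤ k` and `t > 0` such that, with `S_k = ∑_{i<k} α_i X_i`,
`P(|S_j| > t) > c P(|S_k| > t/c)`. -/
theorem no_weighted_comparison :
    ∀ c : ℝ, 0 < c →
      ∃ (Ω : Type) (_ : MeasurableSpace Ω) (P : Measure Ω)
        (_ : IsProbabilityMeasure P) (X : ℕ → Ω → ℝ) (α : ℕ → ℝ) (j k : ℕ) (t : ℝ),
        (∀ i, Measurable (X i)) ∧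
        iIndepFun X P ∧
        (∀ i, IdentDistrib (X i) (X 0) P P) ∧
        (∀ i, 0 < α i) ∧
        1 ≤ j ∧ j ≤ k ∧ 0 < t ∧
        ENNReal.ofReal c * P {ω | t / c < |∑ i ∈ Finset.range k, α i * X i ω|} <
          P {ω | t < |∑ i ∈ Finset.range j, α i * X i ω|} := by
  intro c hc
  exact NWC.main c hc
end
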